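/- arXiv:1604.06283 — 8 statements merged into one kernel-verified Lean document; each statement's English description precedes it below -/
import Mathlib

section
/- If X is a binomial random variable with parameters n and p such that np is an integer, then P[X ≥ np] > 1/2. -/
private def Bf (m q k : ℕ) : ℕ := ((m+q).choose k) * m^k * q^(m+q-k)

private lemma Bf_pos {m q : ℕ} (hm : 1 ≤ m) (hq : 1 ≤ q) {k : ℕ} (hk : k ≤ m + q) :
    0 < Bf m q k := by
  unfold Bf
  exact Nat.mul_pos (Nat.mul_pos (Nat.choose_pos hk) (pow_pos hm _)) (pow_pos hq _)

private lemma Bstep (m q a : ℕ) (ha : a < m + q) :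
    Bf m q (a+1) * ((a+1) * q) = Bf m q a * ((m+q-a) * m) := by
  unfold Bf
  have h := Nat.choose_succ_right_eq (m+q) a
  have h2 : m + q - a = (m + q - (a+1)) + 1 := by omega
  calc (m+q).choose (a+1) * m^(a+1) * q^(m+q-(a+1)) * ((a+1) * q)
      = ((m+q).choose (a+1) * (a+1)) * (m^(a+1) * (q^(m+q-(a+1)) * q)) := by ring
    _ = ((m+q).choose a * (m+q-a)) * (m^(a+1) * q^(m+q-a)) := by
        rw [h, h2, pow_succ]; ring
    _ = (m+q).choose a * m^a * q^(m+q-a) * ((m+q-a) * m) := by rw [pow_succ]; ring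

-- cancellation helpers
private lemma helper_le {B1 B2 B3 B4 c1 c2 c3 c4 : ℕ}
    (e1 : B2 * c1 = B1 * c2) (e2 : B3 * c3 = B4 * c4)
    (hle : B3 ≤ B1) (hco : c3 * c1 ≤ c2 * c4) (hpos : 0 < c4 * c1) :
    B4 ≤ B2 := by
  have key : B4 * (c4 * c1) ≤ B2 * (c4 * c1) := by
    calc B4 * (c4 * c1) = (B3 * c3) * c1 := by rw [e2]; ring
      _ = B3 * (c3 * c1) := by ring
      _ ≤ B1 * (c3 * c1) := Nat.mul_le_mul_right _ hle
      _ ≤ B1 * (c2 * c4) := Nat.mul_le_mul_left _ hco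
      _ = (B1 * c2) * c4 := by ring
      _ = (B2 * c1) * c4 := by rw [e1]
      _ = B2 * (c4 * c1) := by ring
  exact Nat.le_of_mul_le_mul_right key hpos

private lemma helper_lt2 {B1 B2 B3 B4 c1 c2 c3 c4 : ℕ}
    (e1 : B2 * c1 = B1 * c2) (e2 : B3 * c3 = B4 * c4)
    (hle : B3 ≤ B1) (hco : c3 * c1 < c2 * c4) (hB3 : 0 < B3) (hpos : 0 < c4 * c1) :
    B4 < B2 := by
  have hB1 : 0 < B1 := lt_of_lt_of_le hB3 hle
  have key : B4 * (c4 * c1) < B2 * (c4 * c1) := by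
    calc B4 * (c4 * c1) = B3 * (c3 * c1) := by rw [← mul_assoc, ← e2]; ring
      _ ≤ B1 * (c3 * c1) := Nat.mul_le_mul_right _ hle
      _ < B1 * (c2 * c4) := by exact Nat.mul_lt_mul_of_le_of_lt (le_refl _) hco hB1
      _ = (B2 * c1) * c4 := by rw [e1]; ring
      _ = B2 * (c4 * c1) := by ring
  exact Nat.lt_of_mul_lt_mul_right key

private lemma helper_gt {B1 B2 B3 B4 c1 c2 c3 c4 : ℕ}
    (e1 : B2 * c1 = B1 * c2) (e2 : B3 * c3 = B4 * c4)
    (hlt : B1 < B3) (hco : c2 * c4 ≤ c3 * c1) (hpos : 0 < c2 * c4) (hc1 : 0 < c1) :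
    B2 < B4 := by
  have hc4 : 0 < c4 := by
    rcases Nat.eq_zero_or_pos c4 with h | h
    · simp [h] at hpos
    · exact h
  have key : B2 * (c1 * c4) < B4 * (c1 * c4) := by
    calc B2 * (c1 * c4) = (B1 * c2) * c4 := by rw [← mul_assoc, e1]
      _ = B1 * (c2 * c4) := by ring
      _ < B3 * (c2 * c4) := by exact Nat.mul_lt_mul_of_lt_of_le hlt (le_refl _) hpos
      _ ≤ B3 * (c3 * c1) := Nat.mul_le_mul_left _ hco
      _ = (B3 * c3) * c1 := by ring
      _ = B4 * (c1 * c4) := by rw [e2]; ring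
  exact Nat.lt_of_mul_lt_mul_right key

private lemma sum_Bf (m q : ℕ) :
    ∑ k ∈ Finset.range (m+q+1), Bf m q k = (m+q)^(m+q) := by
  rw [add_pow m q (m+q)]
  exact Finset.sum_congr rfl (fun k _ => by unfold Bf; push_cast; ring)

private lemma sum_k_Bf (m q : ℕ) (hm : 1 ≤ m) :
    ∑ k ∈ Finset.range (m+q+1), k * Bf m q k = m * (m+q)^(m+q) := by
  set n := m + q with hn
  have hn1 : 1 ≤ n := by omega
  rw [Finset.sum_range_succ' (fun k => k * Bf m q k) n]
  simp only [Nat.zero_mul, add_zero]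
  have hid : ∀ k ∈ Finset.range n, (k+1) * Bf m q (k+1) = (n * m) * ((n-1).choose k * m^k * q^(n-1-k)) := by
    intro k hk
    have hk' : k < n := Finset.mem_range.mp hk
    have hch : n * (n-1).choose k = n.choose (k+1) * (k+1) := by
      have := Nat.add_one_mul_choose_eq (n-1) k
      rwa [Nat.sub_add_cancel hn1] at this
    unfold Bf
    rw [← hn]
    calc (k+1) * (n.choose (k+1) * m^(k+1) * q^(n-(k+1)))
        = (n.choose (k+1) * (k+1)) * (m^(k+1) * q^(n-(k+1))) := by ring
      _ = (n * (n-1).choose k) * (m^(k+1) * q^(n-(k+1))) := by rw [hch]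
      _ = (n * m) * ((n-1).choose k * m^k * q^(n-1-k)) := by
          rw [pow_succ, show n - (k+1) = n-1-k by omega]; ring
  rw [Finset.sum_congr rfl hid, ← Finset.mul_sum]
  have hbin : ∑ k ∈ Finset.range ((n-1)+1), (n-1).choose k * m^k * q^(n-1-k) = (m+q)^(n-1) := by
    rw [add_pow m q (n-1)]
    exact Finset.sum_congr rfl (fun k _ => by push_cast; ring)
  rw [show Finset.range n = Finset.range ((n-1)+1) by congr 1; omega, hbin, ← hn]
  calc n * m * n^(n-1) = m * (n^(n-1) * n) := by ring
    _ = m * n^n := by rw [← pow_succ, Nat.sub_add_cancel hn1]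

private lemma coefA (j t e : ℕ) (m q : ℕ) (hM : m = t + j + 2) (hQ : q = m + e) :
    ((t+1) * q) * ((m+j+1)*q) ≤ ((q-j)*m) * ((q+j+2)*m) := by
  have hq : q - j = t + e + 2 := by omega
  rw [hq]
  have key : ((t+e+2)*m) * ((q+j+2)*m) =
      ((t+1) * q) * ((m+j+1)*q) + (2*q*m^2 + (e*(2*m+e))*(j^2+2*j) + q^2) := by
    subst hM hQ; ring
  omega

private lemma coefB_key (j u e : ℕ) (m q : ℕ) (hM : m = j + u + 1) (hQ : q = m + e) :
    ((m-j)*q) * ((m+j+1)*q) + e*((q+m)*(j*(j+1)))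
      = ((q-j)*m) * ((q+j+1)*m) + e*(q*m) := by
  have h1 : m - j = u + 1 := by omega
  have h2 : q - j = u + e + 1 := by omega
  rw [h1, h2]; subst hM hQ; ring

private lemma coefB_main (j u e : ℕ) (m q : ℕ) (hM : m = j + u + 1) (hQ : q = m + e)
    (hcond : e = 0 ∨ q*m ≤ (q+m)*(j*(j+1))) :
    ((m-j)*q) * ((m+j+1)*q) ≤ ((q-j)*m) * ((q+j+1)*m) := by
  have key := coefB_key j u e m q hM hQ
  rcases hcond with h | h
  · subst h
    simp only [zero_mul, mul_zero, add_zero] at key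
    omega
  · have := Nat.mul_le_mul_left e h
    omega

private lemma coefB_rev (j u e : ℕ) (m q : ℕ) (hM : m = j + u + 1) (hQ : q = m + e)
    (hcond : (q+m)*(j*(j+1)) ≤ q*m) :
    ((q-j)*m) * ((q+j+1)*m) ≤ ((m-j)*q) * ((m+j+1)*q) := by
  have key := coefB_key j u e m q hM hQ
  have := Nat.mul_le_mul_left e hcond
  omega

private lemma lemA_strict {m q : ℕ} (hm : 1 ≤ m) (hq : 1 ≤ q) :
    Bf m q (m-1) < Bf m q m := by
  have h := Bstep m q (m-1) (by omega)
  rw [show m - 1 + 1 = m by omega, show m + q - (m-1) = q + 1 by omega] at h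
  have hpos : 0 < Bf m q (m-1) := Bf_pos hm hq (by omega)
  have key : Bf m q (m-1) * (m * q) < Bf m q m * (m * q) := by
    calc Bf m q (m-1) * (m * q) < Bf m q (m-1) * ((q+1) * m) := by
          exact Nat.mul_lt_mul_of_le_of_lt (le_refl _) (by nlinarith) hpos
      _ = Bf m q m * (m * q) := h.symm
  exact Nat.lt_of_mul_lt_mul_right key

private lemma lemA_term {m q : ℕ} (hm : 1 ≤ m) (hmq : m ≤ q) :
    ∀ j t, t + (j+1) = m → Bf m q t ≤ Bf m q (m+j) := by
  intro j
  induction j with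
  | zero =>
    intro t ht
    have h := Bstep m q t (by omega)
    rw [show t + 1 = m by omega, show m + q - t = q + 1 by omega] at h
    have key : Bf m q t * ((q+1) * m) ≤ Bf m q m * ((q+1) * m) := by
      calc Bf m q t * ((q+1) * m) = Bf m q m * (m * q) := h.symm
        _ ≤ Bf m q m * ((q+1) * m) := Nat.mul_le_mul_left _ (by nlinarith)
    have := Nat.le_of_mul_le_mul_right key (Nat.mul_pos (by omega) (by omega))
    simpa using this
  | succ j ih =>
    intro t ht
    -- e1 : Bf (m+j+1) * ((m+j+1)*q) = Bf (m+j) * ((q-j)*m)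
    have e1 := Bstep m q (m+j) (by omega)
    rw [show m + q - (m+j) = q - j by omega] at e1
    -- e2 : Bf (t+1) * ((t+1)*q) = Bf t * ((q+j+2)*m)
    have e2 := Bstep m q t (by omega)
    rw [show m + q - t = q + j + 2 by omega] at e2
    have hle : Bf m q (t+1) ≤ Bf m q (m+j) := ih (t+1) (by omega)
    have hco : ((t+1) * q) * ((m+j+1)*q) ≤ ((q-j)*m) * ((q+j+2)*m) :=
      coefA j t (q - m) m q (by omega) (by omega)
    have := helper_le e1 e2 hle hco
      (Nat.mul_pos (Nat.mul_pos (by omega) (by omega)) (Nat.mul_pos (by omega) (by omega)))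
    simpa [show m + (j+1) = m + j + 1 by omega] using this

private lemma lemA {m q : ℕ} (hm : 1 ≤ m) (hmq : m ≤ q) :
    ∑ k ∈ Finset.range m, Bf m q k < ∑ k ∈ Finset.Icc m (m+q), Bf m q k := by
  have h1 : ∑ k ∈ Finset.Icc m (m+q), Bf m q k = ∑ j ∈ Finset.range (q+1), Bf m q (m+j) := by
    apply Finset.sum_nbij' (i := fun k => k - m) (j := fun j => m + j) <;>
      (intros; simp_all [Finset.mem_Icc, Finset.mem_range]) <;> omega
  have h2 : ∑ j ∈ Finset.range m, Bf m q (m+j) ≤ ∑ j ∈ Finset.range (q+1), Bf m q (m+j) :=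
    Finset.sum_le_sum_of_subset (Finset.range_subset_range.mpr (by omega))
  have h3 : ∑ j ∈ Finset.range m, Bf m q (m-1-j) < ∑ j ∈ Finset.range m, Bf m q (m+j) := by
    apply Finset.sum_lt_sum
    · intro j hj
      have hj' : j < m := Finset.mem_range.mp hj
      exact lemA_term hm hmq j (m-1-j) (by omega)
    · exact ⟨0, Finset.mem_range.mpr (by omega), by simpa using lemA_strict hm (by omega)⟩
  have h4 : ∑ j ∈ Finset.range m, Bf m q (m-1-j) = ∑ k ∈ Finset.range m, Bf m q k := by
    apply Finset.sum_nbij' (i := fun j => m - 1 - j) (j := fun k => m - 1 - k) <;>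
      (intros; simp_all [Finset.mem_range]) <;> omega
  omega

-- the two defining relations, rewritten conveniently
private lemma eUp {m q : ℕ} (j : ℕ) (hm : 1 ≤ m) (hj : j < q) :
    Bf m q (m+j+1) * ((m+j+1) * q) = Bf m q (m+j) * ((q-j) * m) := by
  have h := Bstep m q (m+j) (by omega)
  rwa [show m + q - (m+j) = q - j by omega] at h

private lemma eDown {m q : ℕ} (j : ℕ) (hj : j + 1 ≤ m) :
    Bf m q (m-j) * ((m-j) * q) = Bf m q (m-j-1) * ((q+j+1) * m) := by
  have h := Bstep m q (m-j-1) (by omega)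
  rwa [show m - j - 1 + 1 = m - j by omega, show m + q - (m-j-1) = q + j + 1 by omega] at h

private lemma lemF2 {m q : ℕ} (hm : 1 ≤ m) (hmq : m ≤ q) :
    Bf m q (m+1) ≤ Bf m q (m-1) := by
  have e1 : Bf m q (m-1) * ((q+1) * m) = Bf m q m * (m * q) := by
    have h := eDown (m := m) (q := q) 0 (by omega)
    simpa using h.symm
  have e2 : Bf m q m * (q * m) = Bf m q (m+1) * ((m+1) * q) := by
    have h := eUp (m := m) (q := q) 0 hm (by omega)
    simpa [mul_comm] using h.symm
  have hco : (q*m) * ((q+1)*m) ≤ (m*q) * ((m+1)*q) := by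
    calc (q*m) * ((q+1)*m) ≤ (q*m) * ((m+1)*q) := Nat.mul_le_mul_left _ (by nlinarith)
      _ = (m*q) * ((m+1)*q) := by ring
  exact helper_le e1 e2 (le_refl _) hco (Nat.mul_pos (Nat.mul_pos (by omega) (by omega)) (Nat.mul_pos (by omega) (by omega)))

private lemma lemQ {m q : ℕ} (hm : 1 ≤ m) (hlt : m < q) :
    ∀ j, 1 ≤ j → j < m → (q+m)*((j-1)*j) < q*m → Bf m q (m+j) < Bf m q (m-j) := by
  intro j
  induction j with
  | zero => omega
  | succ j ih =>
    intro _ hjm hcond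
    rcases Nat.eq_zero_or_pos j with rfl | hj1
    · -- base: j+1 = 1
      have e1 : Bf m q (m-1) * ((q+1) * m) = Bf m q m * (m * q) := by
        have h := eDown (m := m) (q := q) 0 (by omega)
        simpa using h.symm
      have e2 : Bf m q m * (q * m) = Bf m q (m+1) * ((m+1) * q) := by
        have h := eUp (m := m) (q := q) 0 hm (by omega)
        simpa [mul_comm] using h.symm
      have hco : (q*m) * ((q+1)*m) < (m*q) * ((m+1)*q) := by
        calc (q*m) * ((q+1)*m) < (q*m) * ((m+1)*q) :=
              Nat.mul_lt_mul_of_le_of_lt (le_refl _) (by nlinarith) (Nat.mul_pos (by omega) (by omega))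
          _ = (m*q) * ((m+1)*q) := by ring
      have := helper_lt2 e1 e2 (le_refl _) hco (Bf_pos hm (by omega) (by omega))
        (Nat.mul_pos (Nat.mul_pos (by omega) (by omega)) (Nat.mul_pos (by omega) (by omega)))
      simpa using this
    · -- step
      rw [Nat.add_sub_cancel] at hcond
      have hIH : Bf m q (m+j) < Bf m q (m-j) := by
        apply ih hj1 (by omega)
        calc (q+m)*((j-1)*j) ≤ (q+m)*(j*(j+1)) := by
              apply Nat.mul_le_mul_left
              exact Nat.mul_le_mul (by omega) (by omega)
          _ < q*m := hcond
      have e1 := eUp (m := m) (q := q) j hm (by omega)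
      have e2 := eDown (m := m) (q := q) j (by omega)
      have hco : ((q-j)*m) * ((q+j+1)*m) ≤ ((m-j)*q) * ((m+j+1)*q) :=
        coefB_rev j (m-j-1) (q-m) m q (by omega) (by omega) hcond.le
      have := helper_gt e1 e2 hIH hco
        (Nat.mul_pos (Nat.mul_pos (by omega) (by omega)) (Nat.mul_pos (by omega) (by omega)))
        (Nat.mul_pos (by omega) (by omega))
      have hidx1 : m + (j+1) = m + j + 1 := by omega
      have hidx2 : m - (j+1) = m - j - 1 := by omega
      rw [hidx1, hidx2]
      exact this

private lemma lemM {m q : ℕ} (hm : 1 ≤ m) (hmq : m ≤ q) :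
    ∀ j, 1 ≤ j → j + 1 ≤ m → Bf m q (m-j) ≤ Bf m q (m+j) →
      Bf m q (m-(j+1)) ≤ Bf m q (m+(j+1)) := by
  intro j hj hjm hle
  rw [show m - (j+1) = m - j - 1 by omega, show m + (j+1) = m + j + 1 by omega]
  by_cases hc : q = m ∨ q*m ≤ (q+m)*(j*(j+1))
  · have e1 := eUp (m := m) (q := q) j hm (by omega)
    have e2 := eDown (m := m) (q := q) j (by omega)
    have hco : ((m-j)*q) * ((m+j+1)*q) ≤ ((q-j)*m) * ((q+j+1)*m) := by
      apply coefB_main j (m-j-1) (q-m) m q (by omega) (by omega)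
      rcases hc with h | h
      · left; omega
      · right; exact h
    exact helper_le e1 e2 hle hco
      (Nat.mul_pos (Nat.mul_pos (by omega) (by omega)) (Nat.mul_pos (by omega) (by omega)))
  · push_neg at hc
    obtain ⟨hne, hgt⟩ := hc
    have habs : Bf m q (m+j) < Bf m q (m-j) := by
      apply lemQ hm (by omega) j hj (by omega)
      have h1 : (j-1)*j ≤ j*(j+1) := Nat.mul_le_mul (by omega) (by omega)
      have h2 : (q+m)*((j-1)*j) ≤ (q+m)*(j*(j+1)) := Nat.mul_le_mul_left _ h1
      omega
    omega

private lemma signchange (q : ℕ) (D : ℕ → ℤ) (h1 : 0 ≤ D 1)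
    (hstep : ∀ j, 1 ≤ j → D j ≤ 0 → D (j+1) ≤ 0)
    (hw : ∑ j ∈ Finset.Icc 1 q, (j : ℤ) * D j = 0) :
    0 ≤ ∑ j ∈ Finset.Icc 1 q, D j := by
  classical
  by_cases hall : ∀ j ∈ Finset.Icc 1 q, 0 ≤ D j
  · exact Finset.sum_nonneg hall
  push_neg at hall
  obtain ⟨j1, hj1, hneg⟩ := hall
  have hex : ∃ j, 1 ≤ j ∧ D j < 0 := ⟨j1, (Finset.mem_Icc.mp hj1).1, hneg⟩
  set j0 := Nat.find hex with hj0def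
  obtain ⟨hj01, hj0neg⟩ := Nat.find_spec hex
  have hlow : ∀ j, 1 ≤ j → j < j0 → 0 ≤ D j := by
    intro j h1j hjlt
    by_contra hn
    exact (Nat.find_min hex hjlt) ⟨h1j, by omega⟩
  have hup : ∀ t, D (j0 + t) ≤ 0 := by
    intro t
    induction t with
    | zero => simpa using hj0neg.le
    | succ t ih => exact hstep (j0 + t) (by omega) ih
  have hup' : ∀ j, j0 ≤ j → D j ≤ 0 := by
    intro j hj
    have := hup (j - j0)
    rwa [Nat.add_sub_cancel' hj] at this
  have key : 0 ≤ ∑ j ∈ Finset.Icc 1 q, ((j0 : ℤ) - j) * D j := by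
    apply Finset.sum_nonneg
    intro j hj
    obtain ⟨hj1', hjq⟩ := Finset.mem_Icc.mp hj
    rcases lt_or_ge j j0 with h | h
    · have hDj := hlow j hj1' h
      have : (0:ℤ) ≤ (j0 : ℤ) - j := by
        have : (j:ℤ) < j0 := by exact_mod_cast h
        linarith
      exact mul_nonneg this hDj
    · have hDj := hup' j h
      have : (j0 : ℤ) - j ≤ 0 := by
        have : (j0:ℤ) ≤ j := by exact_mod_cast h
        linarith
      exact mul_nonneg_iff.mpr (Or.inr ⟨this, hDj⟩)
  have expand : ∑ j ∈ Finset.Icc 1 q, ((j0 : ℤ) - j) * D j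
      = j0 * (∑ j ∈ Finset.Icc 1 q, D j) - ∑ j ∈ Finset.Icc 1 q, (j:ℤ) * D j := by
    rw [Finset.mul_sum, ← Finset.sum_sub_distrib]
    exact Finset.sum_congr rfl (fun j _ => by ring)
  rw [expand, hw, sub_zero] at key
  by_contra hS
  push_neg at hS
  have : (j0:ℤ) * (∑ j ∈ Finset.Icc 1 q, D j) < 0 := by
    apply mul_neg_of_pos_of_neg _ hS
    exact_mod_cast hj01
  linarith

private lemma lemB {m q : ℕ} (hm : 1 ≤ m) (hmq : m ≤ q) :
    ∑ k ∈ Finset.Icc (m+1) (m+q), Bf m q k ≤ ∑ k ∈ Finset.range m, Bf m q k := by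
  classical
  set n := m + q with hn
  set D : ℕ → ℤ := fun j => (if j ≤ m then (Bf m q (m-j) : ℤ) else 0) - (Bf m q (m+j) : ℤ)
    with hD
  -- moment identity
  have hs : (∑ k ∈ Finset.range (n+1), (Bf m q k : ℤ)) = ((n:ℤ))^n := by
    have := sum_Bf m q
    rw [hn]
    exact_mod_cast this
  have hks : (∑ k ∈ Finset.range (n+1), (k:ℤ) * (Bf m q k : ℤ)) = (m:ℤ) * (n:ℤ)^n := by
    have := sum_k_Bf m q hm
    rw [hn]
    exact_mod_cast this
  have M0 : ∑ k ∈ Finset.range (n+1), ((m:ℤ) - k) * (Bf m q k : ℤ) = 0 := by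
    have : ∑ k ∈ Finset.range (n+1), ((m:ℤ) - k) * (Bf m q k : ℤ)
        = (m:ℤ) * (∑ k ∈ Finset.range (n+1), (Bf m q k : ℤ))
          - ∑ k ∈ Finset.range (n+1), (k:ℤ) * (Bf m q k : ℤ) := by
      rw [Finset.mul_sum, ← Finset.sum_sub_distrib]
      exact Finset.sum_congr rfl (fun k _ => by ring)
    rw [this, hs, hks]; ring
  -- splitting
  have hsplit : ∀ f : ℕ → ℤ, ∑ k ∈ Finset.range (n+1), f k
      = ∑ k ∈ Finset.range m, f k + f m + ∑ k ∈ Finset.Icc (m+1) n, f k := by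
    intro f
    rw [Finset.range_eq_Ico, ← Finset.sum_Ico_consecutive _ (by omega : 0 ≤ m) (by omega : m ≤ n+1)]
    rw [Finset.sum_eq_sum_Ico_succ_bot (by omega : m < n+1)]
    rw [← Finset.range_eq_Ico, show Finset.Ico (m+1) (n+1) = Finset.Icc (m+1) n from rfl]
    ring
  -- reindexing
  have W1 : ∀ g : ℕ → ℤ, ∑ j ∈ Finset.Icc 1 m, g (m - j) = ∑ k ∈ Finset.range m, g k := by
    intro g
    apply Finset.sum_nbij' (i := fun j => m - j) (j := fun k => m - k) <;>
      (intros; simp_all [Finset.mem_Icc, Finset.mem_range]) <;> omega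
  have W2 : ∀ g : ℕ → ℤ, ∑ j ∈ Finset.Icc 1 q, g (m + j) = ∑ k ∈ Finset.Icc (m+1) n, g k := by
    intro g
    apply Finset.sum_nbij' (i := fun j => m + j) (j := fun k => k - m) <;>
      (intros; simp_all [Finset.mem_Icc]) <;> omega
  -- drop the if
  have hIf : ∀ g : ℕ → ℤ,
      ∑ j ∈ Finset.Icc 1 q, (if j ≤ m then g j else 0) = ∑ j ∈ Finset.Icc 1 m, g j := by
    intro g
    rw [← Finset.sum_subset (Finset.Icc_subset_Icc_right hmq)]
    · exact Finset.sum_congr rfl (fun j hj => by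
        rw [if_pos (Finset.mem_Icc.mp hj).2])
    · intro x hx hnx
      rw [if_neg]
      intro hxm
      exact hnx (Finset.mem_Icc.mpr ⟨(Finset.mem_Icc.mp hx).1, hxm⟩)
  -- weighted sum є zero
  have hw : ∑ j ∈ Finset.Icc 1 q, (j : ℤ) * D j = 0 := by
    have e1 : ∑ j ∈ Finset.Icc 1 q, (j : ℤ) * D j
        = ∑ j ∈ Finset.Icc 1 q, (if j ≤ m then (j:ℤ) * (Bf m q (m-j) : ℤ) else 0)
          - ∑ j ∈ Finset.Icc 1 q, (j:ℤ) * (Bf m q (m+j) : ℤ) := by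
      rw [← Finset.sum_sub_distrib]
      apply Finset.sum_congr rfl
      intro j hj
      simp only [hD]
      by_cases h : j ≤ m <;> simp [h] <;> ring
    rw [e1, hIf (fun j => (j:ℤ) * (Bf m q (m-j) : ℤ))]
    have e2 : ∑ j ∈ Finset.Icc 1 m, (j:ℤ) * (Bf m q (m-j) : ℤ)
        = ∑ k ∈ Finset.range m, ((m:ℤ) - k) * (Bf m q k : ℤ) := by
      rw [← W1 (fun k => ((m:ℤ) - k) * (Bf m q k : ℤ))]
      apply Finset.sum_congr rfl
      intro j hj
      obtain ⟨h1, h2⟩ := Finset.mem_Icc.mp hj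
      have : ((m - j : ℕ) : ℤ) = (m:ℤ) - j := by
        push_cast [Nat.cast_sub h2]; ring
      rw [this]; ring
    have e3 : ∑ j ∈ Finset.Icc 1 q, (j:ℤ) * (Bf m q (m+j) : ℤ)
        = ∑ k ∈ Finset.Icc (m+1) n, ((k:ℤ) - m) * (Bf m q k : ℤ) := by
      rw [← W2 (fun k => ((k:ℤ) - m) * (Bf m q k : ℤ))]
      apply Finset.sum_congr rfl
      intro j hj
      push_cast
      ring
    rw [e2, e3]
    have := hsplit (fun k => ((m:ℤ) - k) * (Bf m q k : ℤ))
    rw [M0] at this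
    simp only [sub_self, zero_mul] at this
    have e4 : ∑ k ∈ Finset.Icc (m+1) n, ((m:ℤ) - k) * (Bf m q k : ℤ)
        = - ∑ k ∈ Finset.Icc (m+1) n, ((k:ℤ) - m) * (Bf m q k : ℤ) := by
      rw [← Finset.sum_neg_distrib]
      exact Finset.sum_congr rfl (fun k _ => by ring)
    rw [e4] at this
    linarith
  -- base sign
  have h1 : 0 ≤ D 1 := by
    simp only [hD, if_pos hm]
    have := lemF2 hm hmq
    have : (Bf m q (m+1) : ℤ) ≤ (Bf m q (m-1) : ℤ) := by exact_mod_cast this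
    linarith
  -- step
  have hstep : ∀ j, 1 ≤ j → D j ≤ 0 → D (j+1) ≤ 0 := by
    intro j hj hneg
    by_cases hjm : j + 1 ≤ m
    · have hj' : j ≤ m := by omega
      simp only [hD, if_pos hj'] at hneg
      have hnat : Bf m q (m-j) ≤ Bf m q (m+j) := by
        have : (Bf m q (m-j) : ℤ) ≤ (Bf m q (m+j) : ℤ) := by linarith
        exact_mod_cast this
      have := lemM hm hmq j hj hjm hnat
      simp only [hD, if_pos hjm]
      have : (Bf m q (m-(j+1)) : ℤ) ≤ (Bf m q (m+(j+1)) : ℤ) := by exact_mod_cast this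
      linarith
    · simp only [hD, if_neg hjm]
      have : (0:ℤ) ≤ (Bf m q (m+(j+1)) : ℤ) := by positivity
      linarith
  -- conclude
  have hsum := signchange q D h1 hstep hw
  have e5 : ∑ j ∈ Finset.Icc 1 q, D j
      = ∑ k ∈ Finset.range m, (Bf m q k : ℤ) - ∑ k ∈ Finset.Icc (m+1) n, (Bf m q k : ℤ) := by
    have : ∑ j ∈ Finset.Icc 1 q, D j
        = ∑ j ∈ Finset.Icc 1 q, (if j ≤ m then (Bf m q (m-j) : ℤ) else 0)
          - ∑ j ∈ Finset.Icc 1 q, (Bf m q (m+j) : ℤ) := by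
      rw [← Finset.sum_sub_distrib]
    rw [this, hIf (fun j => (Bf m q (m-j) : ℤ)), W1 (fun k => (Bf m q k : ℤ)),
      W2 (fun k => (Bf m q k : ℤ))]
  rw [e5] at hsum
  have : (∑ k ∈ Finset.Icc (m+1) n, (Bf m q k : ℤ)) ≤ ∑ k ∈ Finset.range m, (Bf m q k : ℤ) := by
    linarith
  exact_mod_cast this

private lemma Bf_reflect (m q : ℕ) {k : ℕ} (hk : k ≤ m + q) :
    Bf q m k = Bf m q (m + q - k) := by
  unfold Bf
  rw [show q + m = m + q by omega]
  rw [← Nat.choose_symm hk]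
  rw [show m + q - (m + q - k) = k by omega]
  ring

private lemma main_nat (m q : ℕ) (hm : 1 ≤ m) (hq : 1 ≤ q) :
    ∑ k ∈ Finset.range m, Bf m q k < ∑ k ∈ Finset.Icc m (m+q), Bf m q k := by
  rcases le_or_gt m q with hmq | hqm
  · exact lemA hm hmq
  · -- use lemB for (q, m) and reflect
    have hB := lemB (m := q) (q := m) hq hqm.le
    have R1 : ∑ k ∈ Finset.Icc (q+1) (q+m), Bf q m k = ∑ k ∈ Finset.range m, Bf m q k := by
      apply Finset.sum_nbij' (i := fun k => m + q - k) (j := fun k => m + q - k)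
      · intros a ha; simp_all [Finset.mem_Icc, Finset.mem_range]; omega
      · intros a ha; simp_all [Finset.mem_Icc, Finset.mem_range]; omega
      · intros a ha; simp_all [Finset.mem_Icc]; omega
      · intros a ha; simp_all [Finset.mem_range]; omega
      · intros a ha
        simp only [Finset.mem_Icc] at ha
        exact Bf_reflect m q (by omega)
    have R2 : ∑ k ∈ Finset.range q, Bf q m k = ∑ k ∈ Finset.Icc (m+1) (m+q), Bf m q k := by
      apply Finset.sum_nbij' (i := fun k => m + q - k) (j := fun k => m + q - k)
      · intros a ha; simp_all [Finset.mem_Icc, Finset.mem_range]; omega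
      · intros a ha; simp_all [Finset.mem_Icc, Finset.mem_range]; omega
      · intros a ha; simp_all [Finset.mem_range]; omega
      · intros a ha; simp_all [Finset.mem_Icc]; omega
      · intros a ha
        simp only [Finset.mem_range] at ha
        exact Bf_reflect m q (by omega)
    rw [R1, R2] at hB
    -- now: ∑_{range m} ≤ ∑_{Icc (m+1) n} < Bf m + ∑_{Icc (m+1) n} = ∑_{Icc m n}
    have hpos : 0 < Bf m q m := Bf_pos hm hq (by omega)
    have hIcc : ∑ k ∈ Finset.Icc m (m+q), Bf m q k
        = Bf m q m + ∑ k ∈ Finset.Icc (m+1) (m+q), Bf m q k := by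
      rw [show Finset.Icc m (m+q) = Finset.Ico m (m+q+1) from rfl]
      rw [Finset.sum_eq_sum_Ico_succ_bot (by omega : m < m+q+1), Finset.Ico_add_one_right_eq_Icc]
    omega

/-- The binomial probability mass function: `P[Bin(n,p) = k]`. -/
noncomputable def binomialPMF (n : ℕ) (p : ℝ) (k : ℕ) : ℝ :=
  (n.choose k : ℝ) * p ^ k * (1 - p) ^ (n - k)

theorem binomial_integer_mean_ge_mean_gt_half
    (n : ℕ) (hn : 0 < n) (p : ℝ) (hp : 0 < p) (hp1 : p < 1)
    (m : ℕ) (hm : (m : ℝ) = n * p) :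
    (∑ k ∈ (Finset.range (n + 1)).filter (fun (k : ℕ) => (n : ℝ) * p ≤ (k : ℝ)),
        binomialPMF n p k) > 1 / 2 := by
  have hnR : (0:ℝ) < n := by exact_mod_cast hn
  have hm1 : 1 ≤ m := by
    rcases Nat.eq_zero_or_pos m with h | h
    · exfalso
      rw [h] at hm
      have : (0:ℝ) < n * p := mul_pos hnR hp
      simp at hm
      rcases hm with h' | h'
      · omega
      · linarith
    · exact h
  have hmn : m < n := by
    have : (m:ℝ) < n := by
      rw [hm]
      calc (n:ℝ) * p < n * 1 := by
            exact mul_lt_mul_of_pos_left hp1 hnR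
        _ = n := by ring
    exact_mod_cast this
  set q := n - m with hqdef
  have hq1 : 1 ≤ q := by omega
  have hmq : m + q = n := by omega
  have hqR : ((q:ℕ):ℝ) = (n:ℝ) - m := by
    rw [hqdef]
    push_cast [Nat.cast_sub hmn.le]
    ring
  have hpeq : p = (m:ℝ) / n := by
    rw [hm]; field_simp
  have h1p : 1 - p = (q:ℝ) / n := by
    rw [hpeq, hqR]; field_simp
  -- filter is Icc m n
  have hfilter : (Finset.range (n + 1)).filter (fun (k : ℕ) => (n : ℝ) * p ≤ (k : ℝ))
      = Finset.Icc m n := by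
    ext k
    simp only [Finset.mem_filter, Finset.mem_range, Finset.mem_Icc, ← hm]
    constructor
    · rintro ⟨h1, h2⟩
      exact ⟨by exact_mod_cast h2, by omega⟩
    · rintro ⟨h1, h2⟩
      exact ⟨by omega, by exact_mod_cast h1⟩
  -- pmf in terms of Bf
  have hpmf : ∀ k, k ≤ n → binomialPMF n p k = (Bf m q k : ℝ) / (n:ℝ)^n := by
    intro k hk
    unfold binomialPMF Bf
    rw [h1p, hpeq, hmq]
    rw [div_pow, div_pow]
    push_cast
    have hpow : (n:ℝ)^k * (n:ℝ)^(n-k) = (n:ℝ)^n := by rw [← pow_add]; congr 1; omega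
    rw [show (n.choose k : ℝ) * ((m:ℝ)^k / (n:ℝ)^k) * ((q:ℝ)^(n-k) / (n:ℝ)^(n-k))
        = (n.choose k : ℝ) * (m:ℝ)^k * (q:ℝ)^(n-k) / ((n:ℝ)^k * (n:ℝ)^(n-k)) from by ring, hpow]
  rw [hfilter]
  have hS : ∑ k ∈ Finset.Icc m n, binomialPMF n p k
      = (∑ k ∈ Finset.Icc m n, (Bf m q k : ℝ)) / (n:ℝ)^n := by
    rw [Finset.sum_div]
    apply Finset.sum_congr rfl
    intro k hk
    exact hpmf k (Finset.mem_Icc.mp hk).2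
  rw [hS]
  -- the nat inequality
  have hkey := main_nat m q hm1 hq1
  have htot : ∑ k ∈ Finset.range m, Bf m q k + ∑ k ∈ Finset.Icc m (m+q), Bf m q k
      = n^n := by
    rw [← hmq, ← sum_Bf m q]
    rw [Finset.range_eq_Ico, Finset.range_eq_Ico, ← Finset.sum_Ico_consecutive _ (by omega : 0 ≤ m) (by omega : m ≤ m+q+1)]
    rw [← Finset.range_eq_Ico, Finset.Ico_add_one_right_eq_Icc]
  have h2 : n^n < 2 * ∑ k ∈ Finset.Icc m (m+q), Bf m q k := by omega
  rw [hmq] at h2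
  have h2R : ((n:ℝ))^n < 2 * ∑ k ∈ Finset.Icc m n, (Bf m q k : ℝ) := by
    exact_mod_cast h2
  have hNn : (0:ℝ) < (n:ℝ)^n := by positivity
  rw [gt_iff_lt, lt_div_iff₀ hNn]
  linarith
end

section
/- For any real random variable Z with E[Z] = 0 and finite nonzero second moment, P[Z ≥ 0] ≥ (E[|Z|])² / (4 · E[Z²]). -/
open MeasureTheory

theorem prob_nonneg_ge_of_mean_zero
    {Ω : Type*} [MeasurableSpace Ω] (μ : Measure Ω) [IsProbabilityMeasure μ]
    (Z : Ω → ℝ) (hZ : Measurable Z)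
    (hint : Integrable Z μ) (hsq : Integrable (fun ω => Z ω ^ 2) μ)
    (hmean : ∫ ω, Z ω ∂μ = 0) (hpos : 0 < ∫ ω, Z ω ^ 2 ∂μ) :
    (μ {ω | 0 ≤ Z ω}).toReal ≥ (∫ ω, |Z ω| ∂μ) ^ 2 / (4 * ∫ ω, Z ω ^ 2 ∂μ) := by
  set A : Set Ω := {ω | 0 ≤ Z ω} with hA_def
  have hA : MeasurableSet A := measurableSet_le measurable_const hZ
  set f : Ω → ℝ := fun ω => max (Z ω) 0 with hf_def
  set g : Ω → ℝ := A.indicator (fun _ => (1:ℝ)) with hg_def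
  -- f = f * g pointwise
  have hfg : ∀ ω, f ω * g ω = f ω := by
    intro ω
    by_cases h : ω ∈ A
    · simp [hg_def, h]
    · have : Z ω < 0 := not_le.mp h
      simp [hg_def, h, hf_def, max_eq_right this.le]
  -- integral of f
  have hintabs : Integrable (fun ω => |Z ω|) μ := hint.abs
  have hf_eq : ∀ ω, f ω = (Z ω + |Z ω|) / 2 := by
    intro ω
    simp only [hf_def]
    rcases le_or_gt 0 (Z ω) with h | h
    · rw [max_eq_left h, abs_of_nonneg h]; ring
    · rw [max_eq_right h.le, abs_of_neg h]; ring
  have hIf : ∫ ω, f ω ∂μ = (∫ ω, |Z ω| ∂μ) / 2 := by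
    simp_rw [hf_eq]
    rw [integral_div, integral_add hint hintabs, hmean, zero_add]
  -- MemLp facts
  have hf_meas : AEStronglyMeasurable f μ := (hZ.max measurable_const).aestronglyMeasurable
  have hf_sq_int : Integrable (fun ω => f ω ^ 2) μ := by
    refine hsq.mono (hf_meas.pow 2) ?_
    filter_upwards with ω
    have h1 : f ω ^ 2 ≤ Z ω ^ 2 := by
      simp only [hf_def]
      rcases le_or_gt 0 (Z ω) with h | h
      · rw [max_eq_left h]
      · rw [max_eq_right h.le]; nlinarith [sq_nonneg (Z ω)]
    simpa [Real.norm_eq_abs, abs_of_nonneg (sq_nonneg (f ω)), abs_of_nonneg (sq_nonneg (Z ω))] using h1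
  have hf_mem : MemLp f 2 μ := (memLp_two_iff_integrable_sq hf_meas).mpr hf_sq_int
  have hg_mem : MemLp g 2 μ := memLp_indicator_const 2 hA 1 (Or.inr (measure_ne_top μ A))
  have hpq : Real.HolderConjugate 2 2 := by
    constructor <;> norm_num
  have hf_nonneg : 0 ≤ᵐ[μ] f := Filter.Eventually.of_forall fun ω => le_max_right _ _
  have hg_nonneg : 0 ≤ᵐ[μ] g := Filter.Eventually.of_forall fun ω =>
    Set.indicator_nonneg (fun _ _ => zero_le_one) ω
  have h2 : ENNReal.ofReal (2:ℝ) = 2 := by norm_num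
  have holder := integral_mul_le_Lp_mul_Lq_of_nonneg hpq hf_nonneg hg_nonneg
    (h2 ▸ hf_mem) (h2 ▸ hg_mem)
  simp_rw [hfg] at holder
  -- rewrite rpow powers
  have hrw : ∀ x : ℝ, 0 ≤ x → x ^ (2:ℝ) = x ^ 2 := by
    intro x hx
    rw [← Real.rpow_natCast x 2]; norm_num
  have hIf2 : ∫ ω, f ω ^ (2:ℝ) ∂μ = ∫ ω, f ω ^ 2 ∂μ := by
    refine integral_congr_ae (Filter.Eventually.of_forall fun ω => ?_)
    exact hrw _ (le_max_right _ _)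
  have hIg2 : ∫ ω, g ω ^ (2:ℝ) ∂μ = (μ A).toReal := by
    have : ∀ ω, g ω ^ (2:ℝ) = g ω := by
      intro ω
      by_cases h : ω ∈ A <;> simp [hg_def, h]
    simp_rw [this, hg_def]
    rw [integral_indicator_const _ hA, smul_eq_mul, mul_one, measureReal_def]
  rw [hIf, hIf2, hIg2] at holder
  -- bound ∫ f² ≤ ∫ Z²
  have hff : ∫ ω, f ω ^ 2 ∂μ ≤ ∫ ω, Z ω ^ 2 ∂μ := by
    refine integral_mono hf_sq_int hsq fun ω => ?_
    simp only [hf_def]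
    rcases le_or_gt 0 (Z ω) with h | h
    · rw [max_eq_left h]
    · rw [max_eq_right h.le]; nlinarith [sq_nonneg (Z ω)]
  set S := ∫ ω, Z ω ^ 2 ∂μ
  set P := (μ A).toReal
  set I := ∫ ω, |Z ω| ∂μ
  have hP : 0 ≤ P := ENNReal.toReal_nonneg
  have hfI : 0 ≤ ∫ ω, f ω ^ 2 ∂μ := integral_nonneg fun ω => sq_nonneg _
  have key : I / 2 ≤ S ^ ((1:ℝ)/2) * P ^ ((1:ℝ)/2) := by
    refine holder.trans ?_
    gcongr
  rw [← Real.sqrt_eq_rpow, ← Real.sqrt_eq_rpow] at key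
  have hS : (0:ℝ) < S := hpos
  have hsqS : Real.sqrt S ^ 2 = S := Real.sq_sqrt hS.le
  have hsqP : Real.sqrt P ^ 2 = P := Real.sq_sqrt hP
  have hI : (0:ℝ) ≤ I := integral_nonneg fun ω => abs_nonneg (Z ω)
  rw [ge_iff_le, div_le_iff₀ (by positivity)]
  nlinarith [Real.sqrt_nonneg S, Real.sqrt_nonneg P, key, hI, hsqS, hsqP, sq_nonneg (Real.sqrt S * Real.sqrt P - I/2)]
end

section
/- If X ~ Bin(n,p) and np is an integer, then E[X | X ≥ np] < np + √(np(1−p)). -/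
open Finset

lemma binomialPMF_nonneg (n : ℕ) {p : ℝ} (hp : 0 ≤ p) (hp1 : p ≤ 1) (k : ℕ) :
    0 ≤ binomialPMF n p k := by
  unfold binomialPMF
  have : (0:ℝ) ≤ 1 - p := by linarith
  positivity

lemma binomialPMF_pos (n : ℕ) {p : ℝ} (hp : 0 < p) (hp1 : p < 1) {k : ℕ} (hk : k ≤ n) :
    0 < binomialPMF n p k := by
  unfold binomialPMF
  have h1 : (0:ℝ) < 1 - p := by linarith
  have h2 : 0 < n.choose k := Nat.choose_pos hk
  have h2' : (0:ℝ) < (n.choose k : ℝ) := by exact_mod_cast h2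
  positivity

/-- ratio identity: `b_{k+1} * ((k+1) q) = b_k * ((n-k) p)` -/
lemma binomialPMF_ratio (n k : ℕ) (p : ℝ) (hk : k + 1 ≤ n) :
    binomialPMF n p (k+1) * (((k:ℝ)+1) * (1-p)) =
      binomialPMF n p k * (((n:ℝ) - (k:ℝ)) * p) := by
  obtain ⟨d, rfl⟩ : ∃ d, n = k + 1 + d := ⟨n - (k+1), by omega⟩
  have hc : ((k+1+d).choose (k+1) * (k+1) : ℝ) = ((k+1+d).choose k : ℝ) * (d+1) := by
    have := Nat.choose_succ_right_eq (k+1+d) k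
    have h2 : k + 1 + d - k = d + 1 := by omega
    rw [h2] at this
    exact_mod_cast congrArg (Nat.cast (R := ℝ)) this
  unfold binomialPMF
  have e1 : k + 1 + d - (k+1) = d := by omega
  have e2 : k + 1 + d - k = d + 1 := by omega
  rw [e1, e2]
  push_cast
  have : ((k:ℝ) + 1 + (d:ℝ)) - k = (d:ℝ) + 1 := by ring
  rw [this]
  linear_combination (p^(k+1) * (1-p)^(d+1)) * hc

/-- pointwise centered identity: `(k - np) b_k = npq (b'_{k-1} - b'_k)` with `b'` the `Bin(n-1,p)` pmf. -/
lemma binomialPMF_centered (n k : ℕ) (p : ℝ) (hk1 : 1 ≤ k) (hkn : k ≤ n) :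
    ((k:ℝ) - (n:ℝ)*p) * binomialPMF n p k
      = ((n:ℝ)*p*(1-p)) * (binomialPMF (n-1) p (k-1) - binomialPMF (n-1) p k) := by
  obtain ⟨a, rfl⟩ : ∃ a, k = a + 1 := ⟨k - 1, by omega⟩
  rcases eq_or_lt_of_le hkn with heq | hlt
  · -- k = n
    subst heq
    unfold binomialPMF
    have e4 : a.choose (a+1) = 0 := Nat.choose_eq_zero_of_lt (by omega)
    simp only [Nat.add_sub_cancel, Nat.sub_self, Nat.choose_self, e4, Nat.cast_zero,
      Nat.cast_one, pow_zero]
    push_cast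
    ring
  · -- k < n
    obtain ⟨d, rfl⟩ : ∃ d, n = a + 1 + (d + 1) := ⟨n - a - 2, by omega⟩
    unfold binomialPMF
    have e0 : a + 1 - 1 = a := by omega
    have e1 : a + 1 + (d+1) - (a+1) = d + 1 := by omega
    have e2 : a + 1 + (d+1) - 1 = a + d + 1 := by omega
    have e3 : a + d + 1 - a = d + 1 := by omega
    have e4 : a + d + 1 - (a + 1) = d := by omega
    rw [e0, e1, e2, e3, e4]
    have hc1 : ((a+d+2) * (a+d+1).choose a : ℝ) = ((a+d+2).choose (a+1) : ℝ) * (a+1) := by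
      have := Nat.add_one_mul_choose_eq (a+d+1) a
      exact_mod_cast congrArg (Nat.cast (R := ℝ)) this
    have hc2 : ((a+d+2).choose (a+1) : ℝ) = ((a+d+1).choose a : ℝ) + ((a+d+1).choose (a+1) : ℝ) := by
      have := Nat.choose_succ_succ' (a+d+1) a
      exact_mod_cast congrArg (Nat.cast (R := ℝ)) this
    have hn : ((a + 1 + (d+1) : ℕ) : ℝ) = (a:ℝ) + (d:ℝ) + 2 := by push_cast; ring
    have hcast1 : (((a+1+(d+1)).choose (a+1) : ℕ) : ℝ) = ((a+d+2).choose (a+1) : ℝ) := by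
      norm_num; ring_nf
    have hk' : ((a+1 : ℕ) : ℝ) = (a:ℝ) + 1 := by push_cast; ring
    rw [hn]
    have harr : a + 1 + (d+1) = a + d + 2 := by omega
    rw [harr]
    push_cast
    linear_combination (p^a * (1-p)^d * p * (1-p)) * (- hc1 - ((a:ℝ)+(d:ℝ)+2) * p * hc2)

lemma binomialPMF_tilde (n m : ℕ) (p : ℝ) (hm1 : 1 ≤ m) (hmn : m ≤ n) (hm : (m:ℝ) = n*p) :
    binomialPMF (n-1) p (m-1) = binomialPMF n p m := by
  obtain ⟨a, rfl⟩ : ∃ a, m = a + 1 := ⟨m - 1, by omega⟩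
  obtain ⟨d, rfl⟩ : ∃ d, n = a + 1 + d := ⟨n - (a+1), by omega⟩
  unfold binomialPMF
  have e0 : a + 1 - 1 = a := by omega
  have e1 : a + 1 + d - 1 = a + d := by omega
  have e2 : a + d - a = d := by omega
  have e3 : a + 1 + d - (a + 1) = d := by omega
  rw [e0, e1, e2, e3]
  have hc : ((a+d+1) * (a+d).choose a : ℝ) = ((a+d+1).choose (a+1) : ℝ) * (a+1) := by
    have := Nat.add_one_mul_choose_eq (a+d) a
    exact_mod_cast congrArg (Nat.cast (R := ℝ)) this
  have hN : (0:ℝ) < (a:ℝ) + (d:ℝ) + 1 := by positivity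
  apply mul_left_cancel₀ (ne_of_gt hN)
  have harr : a + 1 + d = a + d + 1 := by omega
  rw [harr] at hm
  push_cast at hm ⊢
  -- hm : a + 1 = (a+d+1) * p
  calc ((a:ℝ)+d+1) * ((a+d).choose a * p ^ a * (1-p)^d)
      = (((a:ℝ)+d+1) * (a+d).choose a) * p ^ a * (1-p)^d := by ring
    _ = (((a+d+1).choose (a+1) : ℝ) * (a+1)) * p ^ a * (1-p)^d := by rw [hc]
    _ = (((a+d+1).choose (a+1) : ℝ) * ((a+d+1)*p)) * p ^ a * (1-p)^d := by rw [← hm]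
    _ = ((a:ℝ)+d+1) * (((a+d+1).choose (a+1):ℝ) * p^(a+1) * (1-p)^d) := by ring
    _ = ((a:ℝ)+d+1) * (((a+1+d).choose (a+1):ℝ) * p^(a+1) * (1-p)^d) := by rw [harr]

lemma sum_centered (n m : ℕ) (p : ℝ) (hm1 : 1 ≤ m) (hmn : m ≤ n) :
    ∑ k ∈ Icc m n, ((k:ℝ) - (n:ℝ)*p) * binomialPMF n p k
      = ((n:ℝ)*p*(1-p)) * binomialPMF (n-1) p (m-1) := by
  have hpt : ∀ k ∈ Icc m n, ((k:ℝ) - (n:ℝ)*p) * binomialPMF n p k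
      = ((n:ℝ)*p*(1-p)) * (binomialPMF (n-1) p (k-1) - binomialPMF (n-1) p k) := by
    intro k hk
    rw [mem_Icc] at hk
    exact binomialPMF_centered n k p (le_trans hm1 hk.1) hk.2
  rw [Finset.sum_congr rfl hpt, ← Finset.mul_sum]
  congr 1
  have hre : ∀ k, binomialPMF (n-1) p k = binomialPMF (n-1) p ((k+1) - 1) := by
    intro k; congr 1
  rw [← Finset.Ico_add_one_right_eq_Icc, Finset.sum_Ico_eq_sum_range]
  have : ∀ i ∈ range (n + 1 - m),
      binomialPMF (n-1) p (m + i - 1) - binomialPMF (n-1) p (m + i)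
      = (fun j => binomialPMF (n-1) p (m + j - 1)) i
        - (fun j => binomialPMF (n-1) p (m + j - 1)) (i+1) := by
    intro i _
    have e : m + (i+1) - 1 = m + i := by omega
    simp only [e]
  rw [Finset.sum_congr rfl this, Finset.sum_range_sub']
  have h2 : binomialPMF (n-1) p (m + (n + 1 - m) - 1) = 0 := by
    have e : m + (n + 1 - m) - 1 = n := by omega
    rw [e]
    unfold binomialPMF
    rw [Nat.choose_eq_zero_of_lt (by omega)]
    simp
  have e0 : m + 0 - 1 = m - 1 := by omega
  simp only [h2, e0, sub_zero]

set_option maxHeartbeats 1000000 in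
/-- Key real inequality: `∑_{j=0}^{⌊v⌋} ∏_{i=1}^j (1 - (i-p)/v) > √v` for `v > 1`, `0 < p < 1`. -/
lemma key_sum (v : ℝ) (hv : 1 < v) (p : ℝ) (hp : 0 < p) (hp1 : p < 1) :
    Real.sqrt v < ∑ j ∈ range (⌊v⌋₊ + 1), ∏ i ∈ Icc 1 j, (1 - ((i:ℝ) - p)/v) := by
  have hv0 : (0:ℝ) < v := by linarith
  set K := ⌊v⌋₊ with hK
  have hKv : (K:ℝ) ≤ v := Nat.floor_le hv0.le
  have hvK : v < (K:ℝ) + 1 := Nat.lt_floor_add_one v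
  have hK1 : 1 ≤ K := by
    rw [hK]; exact Nat.le_floor (by exact_mod_cast hv.le)
  have hK2' : (2:ℝ) ≤ v → 2 ≤ K := fun h => Nat.le_floor (by exact_mod_cast h)
  clear_value K
  clear hK
  set P : ℕ → ℝ := fun j => ∏ i ∈ Icc 1 j, (1 - (i:ℝ)/v) with hPdef
  set Q : ℕ → ℝ := fun j => ∏ i ∈ Icc 1 j, (1 - ((i:ℝ) - p)/v) with hQdef
  have hP0 : P 0 = 1 := by simp [hPdef]
  have hP1 : P 1 = 1 - 1/v := by simp [hPdef]
  have hQ1 : Q 1 = 1 - (1-p)/v := by simp [hQdef]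
  have hfac_nn : ∀ i : ℕ, i ≤ K → 0 ≤ 1 - (i:ℝ)/v := by
    intro i hi
    have : (i:ℝ) ≤ v := le_trans (by exact_mod_cast hi) hKv
    have : (i:ℝ)/v ≤ 1 := by rw [div_le_one hv0]; exact this
    linarith
  have hPnn : ∀ j : ℕ, j ≤ K → 0 ≤ P j := by
    intro j hj
    apply Finset.prod_nonneg
    intro i hi
    rw [mem_Icc] at hi
    exact hfac_nn i (le_trans hi.2 hj)
  -- step 1 : ∑ P < ∑ Q
  have hPQ : ∑ j ∈ range (K + 1), P j < ∑ j ∈ range (K + 1), Q j := by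
    apply Finset.sum_lt_sum
    · intro j hj
      rw [mem_range] at hj
      apply Finset.prod_le_prod
      · intro i hi
        rw [mem_Icc] at hi
        exact hfac_nn i (le_trans hi.2 (by omega))
      · intro i hi
        have : (0:ℝ) < p / v := by positivity
        have e : 1 - ((i:ℝ) - p)/v = 1 - (i:ℝ)/v + p/v := by ring
        rw [e]; linarith
    · refine ⟨1, ?_, ?_⟩
      · rw [mem_range]; omega
      · rw [hP1, hQ1]
        have : (0:ℝ) < p / v := by positivity
        have e : 1 - (1 - p)/v = 1 - 1/v + p/v := by ring
        rw [e]; linarith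
  -- step 2 : √v ≤ ∑ P
  have hmain : Real.sqrt v ≤ ∑ j ∈ range (K + 1), P j := by
    have hsum2 : 2 - 1/v ≤ ∑ j ∈ range (K + 1), P j := by
      have hsub : range 2 ⊆ range (K + 1) := by
        apply Finset.range_subset_range.mpr; omega
      have h2 : ∑ j ∈ range 2, P j = 2 - 1/v := by
        rw [Finset.sum_range_succ, Finset.sum_range_one, hP0, hP1]; ring
      calc 2 - 1/v = ∑ j ∈ range 2, P j := h2.symm
        _ ≤ ∑ j ∈ range (K + 1), P j := by
            apply Finset.sum_le_sum_of_subset_of_nonneg hsub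
            intro j hj _
            rw [mem_range] at hj
            exact hPnn j (by omega)
    rcases le_or_gt v 2 with hv2 | hv2
    · -- small case : √v ≤ 2 - 1/v
      have hcube : v^3 ≤ (2*v - 1)^2 := by
        nlinarith [sq_nonneg (v-1), mul_nonneg (sq_nonneg (v-1)) (sub_nonneg.2 hv2)]
      have hsq : v ≤ (2 - 1/v)^2 := by
        have e : 2 - 1/v = (2*v - 1)/v := by field_simp
        rw [e, div_pow, le_div_iff₀ (by positivity)]
        nlinarith [hcube]
      have : Real.sqrt v ≤ 2 - 1/v := by
        rw [Real.sqrt_le_iff]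
        constructor
        · have : 1/v ≤ 1 := by rw [div_le_one hv0]; linarith
          linarith
        · exact hsq
      linarith
    · -- main case : Cauchy–Schwarz
      obtain ⟨N, rfl⟩ : ∃ N, K = N + 1 := ⟨K - 1, by omega⟩
      have hN1 : 1 ≤ N := by
        have : (2:ℕ) ≤ N + 1 := hK2' hv2.le
        omega
      set S := ∑ j ∈ range (N + 1), P j with hS
      set ε := P (N + 1) with hε
      have hεnn : 0 ≤ ε := hPnn (N+1) le_rfl
      have hrec : ∀ j : ℕ, P (j+1) = P j * (1 - ((j:ℝ)+1)/v) := by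
        intro j
        rw [hPdef]
        simp only []
        rw [Finset.prod_Icc_succ_top (by omega : 1 ≤ j + 1)]
        push_cast
        ring
      have hpt : ∀ j : ℕ, ((j:ℝ)+1) * P j = v * (P j - P (j+1)) := by
        intro j
        rw [hrec j]
        field_simp
        ring
      have hI1 : ∑ j ∈ range (N + 1), ((j:ℝ)+1) * P j = v * (1 - ε) := by
        have : ∀ j ∈ range (N+1), ((j:ℝ)+1) * P j = v * (P j - P (j+1)) :=
          fun j _ => hpt j
        rw [Finset.sum_congr rfl this, ← Finset.mul_sum, Finset.sum_range_sub' P, hP0]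
      have hI2 : ∑ j ∈ range (N + 1), ((j:ℝ)+1)^2 * P j = v * (S - ((N:ℝ)+1) * ε) := by
        have hpt2 : ∀ j ∈ range (N+1), ((j:ℝ)+1)^2 * P j
            = v * ((fun i : ℕ => ((i:ℝ)+1) * P i) j - (fun i : ℕ => ((i:ℝ)+1) * P i) (j+1))
              + v * P (j+1) := by
          intro j _
          simp only []
          push_cast
          linear_combination ((j:ℝ)+1) * hpt j
        rw [Finset.sum_congr rfl hpt2, Finset.sum_add_distrib, ← Finset.mul_sum,
          ← Finset.mul_sum, Finset.sum_range_sub' (fun i : ℕ => ((i:ℝ)+1) * P i)]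
        have hshift : ∑ j ∈ range (N + 1), P (j+1) = S + ε - 1 := by
          have := Finset.sum_range_succ' P (N + 1)
          have h2 : ∑ j ∈ range (N + 1 + 1), P j = S + ε := by
            rw [Finset.sum_range_succ]
          rw [h2, hP0] at this
          linarith
        rw [hshift]
        rw [← hε, hP0]
        push_cast
        ring
      -- Cauchy–Schwarz
      have hCS : (∑ j ∈ range (N + 1), ((j:ℝ)+1) * P j)^2
          ≤ (∑ j ∈ range (N + 1), ((j:ℝ)+1)^2 * P j) * (∑ j ∈ range (N + 1), P j) := by
        have hcs := Finset.sum_mul_sq_le_sq_mul_sq (range (N+1))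
          (fun j : ℕ => ((j:ℝ)+1) * Real.sqrt (P j)) (fun j : ℕ => Real.sqrt (P j))
        have e1 : ∀ j ∈ range (N+1),
            (((j:ℝ)+1) * Real.sqrt (P j)) * Real.sqrt (P j) = ((j:ℝ)+1) * P j := by
          intro j hj
          rw [mem_range] at hj
          rw [mul_assoc, Real.mul_self_sqrt (hPnn j (by omega))]
        have e2 : ∀ j ∈ range (N+1),
            (((j:ℝ)+1) * Real.sqrt (P j))^2 = ((j:ℝ)+1)^2 * P j := by
          intro j hj
          rw [mem_range] at hj
          rw [mul_pow, Real.sq_sqrt (hPnn j (by omega))]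
        have e3 : ∀ j ∈ range (N+1), (Real.sqrt (P j))^2 = P j := by
          intro j hj
          rw [mem_range] at hj
          exact Real.sq_sqrt (hPnn j (by omega))
        rw [Finset.sum_congr rfl e1, Finset.sum_congr rfl e2, Finset.sum_congr rfl e3] at hcs
        exact hcs
      rw [hI1, hI2] at hCS
      have hquad : v * (1 - ε)^2 ≤ (S - ((N:ℝ)+1) * ε) * S := by
        have h1 : v * (v * (1 - ε)^2) ≤ v * ((S - ((N:ℝ)+1) * ε) * S) := by
          calc v * (v * (1 - ε)^2) = (v * (1 - ε))^2 := by ring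
            _ ≤ v * (S - ((N:ℝ)+1) * ε) * S := hCS
            _ = v * ((S - ((N:ℝ)+1) * ε) * S) := by ring
        exact le_of_mul_le_mul_left h1 hv0
      have h1v : 1/v ≤ 1 := by rw [div_le_one hv0]; linarith
      have hsum2' : 2 - 1/v ≤ S := by
        have hsub : range 2 ⊆ range (N + 1) := Finset.range_subset_range.mpr (by omega)
        have h2 : ∑ j ∈ range 2, P j = 2 - 1/v := by
          rw [Finset.sum_range_succ, Finset.sum_range_one, hP0, hP1]; ring
        rw [hS, ← h2]
        apply Finset.sum_le_sum_of_subset_of_nonneg hsub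
        intro j hj _
        rw [mem_range] at hj
        exact hPnn j (by omega)
      have hSpos : 0 < S := by linarith
      have h2v : 2*v ≤ ((N:ℝ)+3) * S := by
        have ha : v + 1 ≤ (N:ℝ) + 3 := by
          have : v < (N:ℝ) + 2 := by push_cast at hvK; linarith
          linarith
        have hb : (v+1) * (2 - 1/v) ≤ ((N:ℝ)+3) * S :=
          mul_le_mul ha hsum2' (by linarith) (by linarith)
        have hvv : v * (1/v) = 1 := mul_one_div_cancel (ne_of_gt hv0)
        nlinarith [hb, hvv, h1v]
      have hfinal : v ≤ (S + ε)^2 := by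
        nlinarith [mul_le_mul_of_nonneg_left h2v hεnn, sq_nonneg ε,
          mul_nonneg hv0.le (sq_nonneg ε), hquad]
      have hse : Real.sqrt v ≤ S + ε := by
        rw [Real.sqrt_le_iff]
        exact ⟨by linarith, hfinal⟩
      have hsplit : ∑ j ∈ range (N + 1 + 1), P j = S + ε := by
        rw [Finset.sum_range_succ]
      linarith
  linarith

set_option maxHeartbeats 1000000 in
lemma tail_lower (n m : ℕ) (p : ℝ) (hp : 0 < p) (hp1 : p < 1)
    (hm : (m:ℝ) = n*p) (hm1 : 1 ≤ m) (hmn : m < n) :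
    Real.sqrt ((n:ℝ)*p*(1-p)) * binomialPMF n p m < ∑ k ∈ Icc m n, binomialPMF n p k := by
  set q : ℝ := 1 - p with hq
  have hq0 : 0 < q := by rw [hq]; linarith
  set v : ℝ := (n:ℝ)*p*q with hv
  have hn0 : (0:ℝ) < n := by
    have : (0:ℝ) < (m:ℝ) := by exact_mod_cast hm1
    nlinarith [hm]
  have hv0 : 0 < v := by rw [hv]; positivity
  have hbm : 0 < binomialPMF n p m := binomialPMF_pos n hp hp1 hmn.le
  have hnm : v < (n:ℝ) - (m:ℝ) := by
    rw [hv, hm]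
    nlinarith [hn0, hq0, hp, hp1]
  rcases le_or_gt v 1 with hv1 | hv1
  · -- trivial case
    have hsqv : Real.sqrt v ≤ 1 := by
      rw [show (1:ℝ) = Real.sqrt 1 by simp]
      exact Real.sqrt_le_sqrt hv1
    have hbn : 0 < binomialPMF n p n := binomialPMF_pos n hp hp1 le_rfl
    have hsub : {m, n} ⊆ Icc m n := by
      intro x hx
      simp only [Finset.mem_insert, Finset.mem_singleton] at hx
      rcases hx with rfl | rfl <;> simp [mem_Icc, hmn.le]
    have hpair : binomialPMF n p m + binomialPMF n p n ≤ ∑ k ∈ Icc m n, binomialPMF n p k := by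
      rw [← Finset.sum_pair (by omega : m ≠ n)]
      apply Finset.sum_le_sum_of_subset_of_nonneg hsub
      intro k _ _
      exact binomialPMF_nonneg n hp.le hp1.le k
    calc Real.sqrt v * binomialPMF n p m ≤ 1 * binomialPMF n p m :=
          mul_le_mul_of_nonneg_right hsqv hbm.le
      _ < binomialPMF n p m + binomialPMF n p n := by linarith
      _ ≤ _ := hpair
  · -- main case
    set K := ⌊v⌋₊ with hK
    have hKv : (K:ℝ) ≤ v := Nat.floor_le hv0.le
    have hmK : m + K ≤ n := by
      have h1 : (K:ℝ) < (n:ℝ) - (m:ℝ) := lt_of_le_of_lt hKv hnm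
      have : ((m + K : ℕ) : ℝ) < (n:ℝ) := by push_cast; linarith
      exact_mod_cast this.le
    set Q : ℕ → ℝ := fun j => ∏ i ∈ Icc 1 j, (1 - ((i:ℝ) - p)/v) with hQdef
    have hfac_nn : ∀ i : ℕ, i ≤ K → 0 ≤ 1 - ((i:ℝ) - p)/v := by
      intro i hi
      have h1 : (i:ℝ) ≤ v := le_trans (by exact_mod_cast hi) hKv
      have h2 : ((i:ℝ) - p)/v ≤ 1 := by
        rw [div_le_one hv0]; linarith
      linarith
    have hQnn : ∀ j : ℕ, j ≤ K → 0 ≤ Q j := by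
      intro j hj
      apply Finset.prod_nonneg
      intro i hi
      rw [mem_Icc] at hi
      exact hfac_nn i (le_trans hi.2 hj)
    -- pointwise domination : b_m * Q j ≤ b_{m+j}
    have hdom : ∀ j : ℕ, j ≤ K → binomialPMF n p m * Q j ≤ binomialPMF n p (m + j) := by
      intro j
      induction j with
      | zero =>
        intro _
        simp [hQdef]
      | succ j ih =>
        intro hj
        have hjK : j ≤ K := by omega
        have hIH := ih hjK
        have hfac : 0 ≤ 1 - (((j:ℝ)+1) - p)/v := by
          have := hfac_nn (j+1) hj
          push_cast at this
          exact this
        have hQrec : Q (j+1) = Q j * (1 - (((j:ℝ)+1) - p)/v) := by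
          rw [hQdef]
          simp only []
          rw [Finset.prod_Icc_succ_top (by omega : 1 ≤ j + 1)]
          push_cast
          ring
        have hmj1 : m + j + 1 ≤ n := by omega
        have hratio := binomialPMF_ratio n (m+j) p hmj1
        -- rewrite the coefficients in terms of v
        have hc1 : ((m+j : ℕ):ℝ) + 1 = ((v + ((j:ℝ)+1)*q)) / q := by
          push_cast
          rw [hm, hv]
          field_simp
          ring
        have hc2 : ((n:ℝ) - ((m+j:ℕ):ℝ)) * p = v - (j:ℝ)*p := by
          push_cast
          rw [hm, hv, hq]
          ring
        have hb_nn : 0 ≤ binomialPMF n p (m+j) := binomialPMF_nonneg n hp.le hp1.le _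
        have hvq : 0 < v + ((j:ℝ)+1)*q := by positivity
        -- key ineq : (1 - ((j+1)-p)/v) * (v + (j+1) q) ≤ v - j p
        have hkey : (1 - (((j:ℝ)+1) - p)/v) * (v + ((j:ℝ)+1)*q) ≤ v - (j:ℝ)*p := by
          have hj1p : 0 ≤ (j:ℝ) + 1 - p := by
            have : (0:ℝ) ≤ (j:ℝ) := Nat.cast_nonneg j
            linarith
          have e : 1 - (((j:ℝ)+1) - p)/v = (v - (((j:ℝ)+1) - p))/v := by
            field_simp
          rw [e, div_mul_eq_mul_div, div_le_iff₀ hv0, hq]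
          nlinarith [mul_nonneg (mul_nonneg hj1p (by positivity : (0:ℝ) ≤ (j:ℝ)+1))
            (by linarith : (0:ℝ) ≤ 1 - p)]
        have hstep : binomialPMF n p (m+j) * (1 - (((j:ℝ)+1) - p)/v)
            ≤ binomialPMF n p (m+j+1) := by
          have h1 : binomialPMF n p (m+j) * (1 - (((j:ℝ)+1) - p)/v) * (v + ((j:ℝ)+1)*q)
              ≤ binomialPMF n p (m+j+1) * (v + ((j:ℝ)+1)*q) := by
            have hL : binomialPMF n p (m+j) * (1 - (((j:ℝ)+1) - p)/v) * (v + ((j:ℝ)+1)*q)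
                ≤ binomialPMF n p (m+j) * (v - (j:ℝ)*p) :=
              by
                rw [mul_assoc]
                exact mul_le_mul_of_nonneg_left
                  (by
                    calc (1 - (((j:ℝ)+1) - p)/v) * (v + ((j:ℝ)+1)*q) ≤ v - (j:ℝ)*p := hkey)
                  hb_nn
            have hR : binomialPMF n p (m+j) * (v - (j:ℝ)*p)
                = binomialPMF n p (m+j+1) * (v + ((j:ℝ)+1)*q) := by
              rw [← hc2]
              have e : binomialPMF n p (m+j+1) * (v + ((j:ℝ)+1)*q)
                  = binomialPMF n p (m+j+1) * ((((m+j:ℕ):ℝ) + 1) * q) := by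
                rw [hc1]
                field_simp
              rw [e]
              exact hratio.symm
            exact hL.trans (le_of_eq hR)
          exact le_of_mul_le_mul_right h1 hvq
        calc binomialPMF n p m * Q (j+1)
            = (binomialPMF n p m * Q j) * (1 - (((j:ℝ)+1) - p)/v) := by rw [hQrec]; ring
          _ ≤ binomialPMF n p (m+j) * (1 - (((j:ℝ)+1) - p)/v) :=
              mul_le_mul_of_nonneg_right hIH hfac
          _ ≤ binomialPMF n p (m+j+1) := hstep
          _ = binomialPMF n p (m+(j+1)) := by rw [← Nat.add_assoc]
    -- sum up
    have hsum : ∑ j ∈ range (K+1), binomialPMF n p m * Q j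
        ≤ ∑ k ∈ Icc m n, binomialPMF n p k := by
      calc ∑ j ∈ range (K+1), binomialPMF n p m * Q j
          ≤ ∑ j ∈ range (K+1), binomialPMF n p (m + j) := by
            apply Finset.sum_le_sum
            intro j hj
            rw [mem_range] at hj
            exact hdom j (by omega)
        _ = ∑ k ∈ Icc m (m + K), binomialPMF n p k := by
            rw [← Finset.Ico_add_one_right_eq_Icc, Finset.sum_Ico_eq_sum_range]
            have e : m + K + 1 - m = K + 1 := by omega
            rw [e]
        _ ≤ ∑ k ∈ Icc m n, binomialPMF n p k := by
            apply Finset.sum_le_sum_of_subset_of_nonneg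
            · intro x hx
              rw [mem_Icc] at hx ⊢
              omega
            · intro k _ _
              exact binomialPMF_nonneg n hp.le hp1.le k
    have hks := key_sum v hv1 p hp hp1
    calc Real.sqrt v * binomialPMF n p m
        < (∑ j ∈ range (K+1), Q j) * binomialPMF n p m := by
          apply mul_lt_mul_of_pos_right _ hbm
          rw [hK]
          exact hks
      _ = ∑ j ∈ range (K+1), binomialPMF n p m * Q j := by
          rw [Finset.sum_mul]
          apply Finset.sum_congr rfl
          intro j _
          ring
      _ ≤ ∑ k ∈ Icc m n, binomialPMF n p k := hsum

theorem binomial_integer_mean_tail_cond_exp_lt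
    (n : ℕ) (hn : 0 < n) (p : ℝ) (hp : 0 < p) (hp1 : p < 1)
    (m : ℕ) (hm : (m : ℝ) = n * p) :
    (∑ k ∈ Finset.Icc m n, (k : ℝ) * binomialPMF n p k) /
      (∑ k ∈ Finset.Icc m n, binomialPMF n p k)
      < n * p + Real.sqrt (n * p * (1 - p)) := by
  have hq0 : 0 < 1 - p := by linarith
  have hn0 : (0:ℝ) < n := by exact_mod_cast hn
  have hm1 : 1 ≤ m := by
    have h : (0:ℝ) < (m:ℝ) := by rw [hm]; positivity
    have : 0 < m := by exact_mod_cast h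
    omega
  have hmn : m < n := by
    have h : (m:ℝ) < (n:ℝ) := by rw [hm]; nlinarith
    exact_mod_cast h
  set S0 := ∑ k ∈ Finset.Icc m n, binomialPMF n p k with hS0
  have hS0pos : 0 < S0 := by
    rw [hS0]
    apply Finset.sum_pos
    · intro k hk
      exact binomialPMF_pos n hp hp1 (Finset.mem_Icc.mp hk).2
    · exact ⟨m, Finset.mem_Icc.mpr ⟨le_rfl, hmn.le⟩⟩
  have hcent := sum_centered n m p hm1 hmn.le
  rw [binomialPMF_tilde n m p hm1 hmn.le hm] at hcent
  have hsum1 : ∑ k ∈ Finset.Icc m n, (k:ℝ) * binomialPMF n p k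
      = (n:ℝ)*p*S0 + (n:ℝ)*p*(1-p) * binomialPMF n p m := by
    have hexp : ∑ k ∈ Finset.Icc m n, ((k:ℝ) - (n:ℝ)*p) * binomialPMF n p k
        = ∑ k ∈ Finset.Icc m n, (k:ℝ) * binomialPMF n p k - (n:ℝ)*p*S0 := by
      rw [hS0, Finset.mul_sum, ← Finset.sum_sub_distrib]
      apply Finset.sum_congr rfl
      intro k _
      ring
    rw [hexp] at hcent
    linarith
  have htail := tail_lower n m p hp hp1 hm hm1 hmn
  rw [div_lt_iff₀ hS0pos, hsum1]
  have hvnn : (0:ℝ) ≤ (n:ℝ)*p*(1-p) := by positivity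
  have hsq : Real.sqrt ((n:ℝ)*p*(1-p)) * Real.sqrt ((n:ℝ)*p*(1-p)) = (n:ℝ)*p*(1-p) :=
    Real.mul_self_sqrt hvnn
  have hsqpos : 0 < Real.sqrt ((n:ℝ)*p*(1-p)) := Real.sqrt_pos.mpr (by positivity)
  have h2 : (n:ℝ)*p*(1-p) * binomialPMF n p m < Real.sqrt ((n:ℝ)*p*(1-p)) * S0 := by
    have h3 := mul_lt_mul_of_pos_left htail hsqpos
    calc (n:ℝ)*p*(1-p) * binomialPMF n p m
        = Real.sqrt ((n:ℝ)*p*(1-p)) * (Real.sqrt ((n:ℝ)*p*(1-p)) * binomialPMF n p m) := by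
          rw [← mul_assoc, hsq]
      _ < Real.sqrt ((n:ℝ)*p*(1-p)) * S0 := h3
  have hexp2 : ((n:ℝ)*p + Real.sqrt ((n:ℝ)*p*(1-p))) * S0
      = (n:ℝ)*p*S0 + Real.sqrt ((n:ℝ)*p*(1-p)) * S0 := by ring
  rw [hexp2]
  linarith
end

section
/- Let n ≥ 2 be an integer and p ∈ [1/n, 1 − 1/n]. If X ~ Bin(n,p), then E[|X − np|] ≥ √(np(1−p)/2). -/
lemma cube_nonneg (n : ℕ) : (0:ℝ) ≤ (n:ℝ)*((n:ℝ)-1)*((n:ℝ)-2) := by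
  match n with
  | 0 => norm_num
  | 1 => norm_num
  | (m+2) =>
    push_cast
    have : (0:ℝ) ≤ (m:ℝ) := Nat.cast_nonneg m
    nlinarith [sq_nonneg ((m:ℝ)+1), mul_nonneg this this, mul_nonneg (mul_nonneg this this) this]

/-- cubic Bernoulli -/
lemma bern3 (x : ℝ) (hx : 0 ≤ x) (n : ℕ) :
    1 + n*x + n*(n-1)/2*x^2 + n*(n-1)*(n-2)/6*x^3 ≤ (1+x)^n := by
  induction n with
  | zero => norm_num
  | succ n ih =>
    have h1 : (0:ℝ) ≤ 1 + x := by linarith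
    have key : (1 + n*x + n*(n-1)/2*x^2 + n*(n-1)*(n-2)/6*x^3) * (1+x)
        ≤ (1+x)^(n+1) := by
      rw [pow_succ]
      apply mul_le_mul_of_nonneg_right ih h1
    have h3 := cube_nonneg n
    have h4 : (0:ℝ) ≤ x^4 := pow_nonneg hx 4
    have expand : 1 + ((n:ℝ)+1)*x + ((n:ℝ)+1)*(((n:ℝ)+1)-1)/2*x^2 + ((n:ℝ)+1)*(((n:ℝ)+1)-1)*(((n:ℝ)+1)-2)/6*x^3
        ≤ (1 + n*x + n*(n-1)/2*x^2 + n*(n-1)*(n-2)/6*x^3) * (1+x) := by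
      nlinarith [mul_nonneg h3 h4]
    push_cast
    calc 1 + ((n:ℝ)+1)*x + ((n:ℝ)+1)*(((n:ℝ)+1)-1)/2*x^2 + ((n:ℝ)+1)*(((n:ℝ)+1)-1)*(((n:ℝ)+1)-2)/6*x^3
        ≤ (1 + n*x + n*(n-1)/2*x^2 + n*(n-1)*(n-2)/6*x^3) * (1+x) := expand
      _ ≤ (1+x)^(n+1) := key

lemma Fstep (m : ℕ) (hm : 1 ≤ m) :
    (m:ℝ)^(2*m+1) * ((m:ℝ)+2)^(2*m+3) ≤ ((m:ℝ)+1)^(4*m+4) := by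
  have hm1 : (1:ℝ) ≤ (m:ℝ) := by exact_mod_cast hm
  set M : ℝ := (m:ℝ) with hM
  have hQ : (0:ℝ) < M^2+2*M := by nlinarith
  have hb := bern3 (1/(M^2+2*M)) (by positivity) (2*m+1)
  have hcast : ((2*m+1:ℕ):ℝ) = 2*M+1 := by push_cast; ring
  rw [hcast] at hb
  have key : (M+2)^2 ≤ (1 + (2*M+1)*(1/(M^2+2*M)) + (2*M+1)*((2*M+1)-1)/2*(1/(M^2+2*M))^2
      + (2*M+1)*((2*M+1)-1)*((2*M+1)-2)/6*(1/(M^2+2*M))^3) * (M+1)^2 := by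
    rw [← sub_nonneg]
    have hQ' : (M^2+2*M) ≠ 0 := ne_of_gt hQ
    have keyid : (1 + (2*M+1)*(1/(M^2+2*M)) + (2*M+1)*((2*M+1)-1)/2*(1/(M^2+2*M))^2
        + (2*M+1)*((2*M+1)-1)*((2*M+1)-2)/6*(1/(M^2+2*M))^3) * (M+1)^2 - (M+2)^2
        = M*(M^4+5*M^3+18*M^2+16*M-1)/(3*(M^2+2*M)^3) := by
      field_simp
      ring
    rw [keyid]
    apply div_nonneg _ (by positivity)
    nlinarith [pow_nonneg (le_trans zero_le_one hm1) 4, pow_nonneg (le_trans zero_le_one hm1) 3, sq_nonneg M]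
  have key2 : (M+2)^2 ≤ (1+1/(M^2+2*M))^(2*m+1) * (M+1)^2 := by
    refine key.trans (mul_le_mul_of_nonneg_right hb (by positivity))
  have hQpow : (0:ℝ) < (M^2+2*M)^(2*m+1) := by positivity
  have key3 : (M^2+2*M)^(2*m+1) * (M+2)^2 ≤ (M^2+2*M+1)^(2*m+1) * (M+1)^2 := by
    have := mul_le_mul_of_nonneg_left key2 hQpow.le
    calc (M^2+2*M)^(2*m+1) * (M+2)^2
        ≤ (M^2+2*M)^(2*m+1) * ((1+1/(M^2+2*M))^(2*m+1) * (M+1)^2) := this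
      _ = ((M^2+2*M)^(2*m+1) * (1+1/(M^2+2*M))^(2*m+1)) * (M+1)^2 := by ring
      _ = ((M^2+2*M)*(1+1/(M^2+2*M)))^(2*m+1) * (M+1)^2 := by rw [← mul_pow]
      _ = (M^2+2*M+1)^(2*m+1) * (M+1)^2 := by
          congr 2
          field_simp
  calc M^(2*m+1) * (M+2)^(2*m+3)
      = (M*(M+2))^(2*m+1) * (M+2)^2 := by rw [mul_pow]; ring
    _ = (M^2+2*M)^(2*m+1) * (M+2)^2 := by ring_nf
    _ ≤ (M^2+2*M+1)^(2*m+1) * (M+1)^2 := key3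
    _ = ((M+1)^2)^(2*m+1) * (M+1)^2 := by ring_nf
    _ = (M+1)^(4*m+4) := by rw [← pow_mul, ← pow_add]; ring_nf

lemma Fanti (a : ℕ) (ha : 1 ≤ a) : ∀ b : ℕ, a ≤ b →
    (a:ℝ)^(2*a+1) * ((b:ℝ)+1)^(2*b+1) ≤ ((a:ℝ)+1)^(2*a+1) * (b:ℝ)^(2*b+1) := by
  intro b hb
  induction b, hb using Nat.le_induction with
  | base => exact le_of_eq (by ring)
  | succ b hab ih =>
    have hb1 : 1 ≤ b := le_trans ha hab
    have hbR : (1:ℝ) ≤ (b:ℝ) := by exact_mod_cast hb1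
    have hbpos : (0:ℝ) < (b:ℝ)^(2*b+1) := by positivity
    have hstep := Fstep b hb1
    have haR : (0:ℝ) ≤ (a:ℝ) := Nat.cast_nonneg a
    have hA : (0:ℝ) ≤ (a:ℝ)^(2*a+1) := by positivity
    -- multiply Fstep by a^(2a+1), IH by (b+1)^(2b+3)
    have h1 : (a:ℝ)^(2*a+1) * ((b:ℝ)^(2*b+1)*((b:ℝ)+2)^(2*b+3)) ≤ (a:ℝ)^(2*a+1) * ((b:ℝ)+1)^(4*b+4) :=
      mul_le_mul_of_nonneg_left hstep hA
    have h2 : ((a:ℝ)^(2*a+1) * ((b:ℝ)+1)^(2*b+1)) * ((b:ℝ)+1)^(2*b+3)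
        ≤ (((a:ℝ)+1)^(2*a+1) * (b:ℝ)^(2*b+1)) * ((b:ℝ)+1)^(2*b+3) :=
      mul_le_mul_of_nonneg_right ih (by positivity)
    have hb44 : ((b:ℝ)+1)^(4*b+4) = ((b:ℝ)+1)^(2*b+1) * ((b:ℝ)+1)^(2*b+3) := by
      rw [← pow_add]; congr 1; ring
    have key : ((a:ℝ)^(2*a+1) * (((b:ℝ)+1)+1)^(2*(b+1)+1)) * (b:ℝ)^(2*b+1)
        ≤ (((a:ℝ)+1)^(2*a+1) * ((b:ℝ)+1)^(2*(b+1)+1)) * (b:ℝ)^(2*b+1) := by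
      have e1 : ((a:ℝ)^(2*a+1) * (((b:ℝ)+1)+1)^(2*(b+1)+1)) * (b:ℝ)^(2*b+1)
          = (a:ℝ)^(2*a+1) * ((b:ℝ)^(2*b+1)*((b:ℝ)+2)^(2*b+3)) := by
        rw [show 2*(b+1)+1 = 2*b+3 by ring]; ring_nf
      have e2 : (((a:ℝ)+1)^(2*a+1) * ((b:ℝ)+1)^(2*(b+1)+1)) * (b:ℝ)^(2*b+1)
          = (((a:ℝ)+1)^(2*a+1) * (b:ℝ)^(2*b+1)) * ((b:ℝ)+1)^(2*b+3) := by
        rw [show 2*(b+1)+1 = 2*b+3 by ring]; ring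
      rw [e1, e2]
      calc (a:ℝ)^(2*a+1) * ((b:ℝ)^(2*b+1)*((b:ℝ)+2)^(2*b+3))
          ≤ (a:ℝ)^(2*a+1) * ((b:ℝ)+1)^(4*b+4) := h1
        _ = ((a:ℝ)^(2*a+1) * ((b:ℝ)+1)^(2*b+1)) * ((b:ℝ)+1)^(2*b+3) := by rw [hb44]; ring
        _ ≤ (((a:ℝ)+1)^(2*a+1) * (b:ℝ)^(2*b+1)) * ((b:ℝ)+1)^(2*b+3) := h2
    have := le_of_mul_le_mul_right (by exact key) hbpos
    push_cast
    convert this using 2 <;> push_cast <;> ring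

lemma star (j : ℕ) (hj : 1 ≤ j) : ∀ k : ℕ, 1 ≤ k →
    ((k:ℝ)+(j:ℝ))^(2*(k+j)+1)
      ≤ 8*(k:ℝ)*(j:ℝ)*(((k+j).choose k):ℝ)^2 * (k:ℝ)^(2*k) * (j:ℝ)^(2*j) := by
  intro k hk
  induction k, hk using Nat.le_induction with
  | base =>
    have h := Fanti 1 le_rfl j hj
    norm_num at h
    rw [Nat.choose_one_right]
    push_cast
    norm_num
    have hjpos : (0:ℝ) < (j:ℝ) := by exact_mod_cast hj
    calc ((1:ℝ) + (j:ℝ)) ^ (2 * (1 + j) + 1)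
        = ((j:ℝ)+1)^(2*j+1) * ((j:ℝ)+1)^2 := by
          rw [show 2*(1+j)+1 = (2*j+1)+2 by ring, pow_add]; ring_nf
      _ ≤ (8 * (j:ℝ)^(2*j+1)) * ((j:ℝ)+1)^2 := by
          exact mul_le_mul_of_nonneg_right h (by positivity)
      _ = 8 * (j:ℝ) * (1 + (j:ℝ))^2 * (j:ℝ)^(2*j) := by
          rw [show 2*j+1 = 2*j+1 from rfl, pow_succ]; ring
  | succ k hk1 ih =>
    have hkR : (1:ℝ) ≤ (k:ℝ) := by exact_mod_cast hk1
    have hkpos : (0:ℝ) < (k:ℝ)^(2*k+1) := by positivity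
    set Cold : ℝ := (((k+j).choose k : ℕ):ℝ) with hCold
    set Cnew : ℝ := ((((k+1)+j).choose (k+1) : ℕ):ℝ) with hCnew
    have hch : ((k:ℝ)+(j:ℝ)+1) * Cold = Cnew * ((k:ℝ)+1) := by
      have := Nat.add_one_mul_choose_eq (k+j) k
      have : ((k+j+1) * ((k+j).choose k) : ℕ) = ((k+j+1).choose (k+1) * (k+1) : ℕ) := this
      have hcast := congrArg (fun x : ℕ => (x:ℝ)) this
      push_cast at hcast
      rw [hCold, hCnew]
      push_cast
      convert hcast using 2 <;> ring_nf
    have hsq : ((k:ℝ)+(j:ℝ)+1)^2 * Cold^2 = ((k:ℝ)+1)^2 * Cnew^2 := by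
      have := congrArg (fun x : ℝ => x^2) hch
      simp only [mul_pow] at this
      linarith [this]
    -- Fanti with a = k, b = k+j
    have hfa := Fanti k hk1 (k+j) (Nat.le_add_right k j)
    have hfaR : (k:ℝ)^(2*k+1) * ((k:ℝ)+(j:ℝ)+1)^(2*(k+j)+1)
        ≤ ((k:ℝ)+1)^(2*k+1) * ((k:ℝ)+(j:ℝ))^(2*(k+j)+1) := by
      push_cast at hfa
      convert hfa using 3 <;> push_cast <;> ring
    -- chain
    have step1 : (k:ℝ)^(2*k+1) * ((k:ℝ)+(j:ℝ)+1)^(2*(k+j)+3)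
        ≤ ((k:ℝ)+(j:ℝ)+1)^2 * (((k:ℝ)+1)^(2*k+1) * ((k:ℝ)+(j:ℝ))^(2*(k+j)+1)) := by
      have e : (k:ℝ)^(2*k+1) * ((k:ℝ)+(j:ℝ)+1)^(2*(k+j)+3)
          = ((k:ℝ)+(j:ℝ)+1)^2 * ((k:ℝ)^(2*k+1) * ((k:ℝ)+(j:ℝ)+1)^(2*(k+j)+1)) := by
        rw [show 2*(k+j)+3 = 2 + (2*(k+j)+1) by ring, pow_add]; ring
      rw [e]
      exact mul_le_mul_of_nonneg_left hfaR (by positivity)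
    have step2 : ((k:ℝ)+(j:ℝ)+1)^2 * (((k:ℝ)+1)^(2*k+1) * ((k:ℝ)+(j:ℝ))^(2*(k+j)+1))
        ≤ ((k:ℝ)+(j:ℝ)+1)^2 * (((k:ℝ)+1)^(2*k+1) * (8*(k:ℝ)*(j:ℝ)*Cold^2*(k:ℝ)^(2*k)*(j:ℝ)^(2*j))) := by
      apply mul_le_mul_of_nonneg_left _ (by positivity)
      exact mul_le_mul_of_nonneg_left ih (by positivity)
    have E : ((k:ℝ)+(j:ℝ)+1)^2 * (((k:ℝ)+1)^(2*k+1) * (8*(k:ℝ)*(j:ℝ)*Cold^2*(k:ℝ)^(2*k)*(j:ℝ)^(2*j)))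
        = (8*((k:ℝ)+1)*(j:ℝ)*Cnew^2*((k:ℝ)+1)^(2*(k+1))*(j:ℝ)^(2*j)) * (k:ℝ)^(2*k+1) := by
      calc ((k:ℝ)+(j:ℝ)+1)^2 * (((k:ℝ)+1)^(2*k+1) * (8*(k:ℝ)*(j:ℝ)*Cold^2*(k:ℝ)^(2*k)*(j:ℝ)^(2*j)))
          = (8*(k:ℝ)*(j:ℝ)*(k:ℝ)^(2*k)*(j:ℝ)^(2*j)*((k:ℝ)+1)^(2*k+1)) * (((k:ℝ)+(j:ℝ)+1)^2 * Cold^2) := by ring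
        _ = (8*(k:ℝ)*(j:ℝ)*(k:ℝ)^(2*k)*(j:ℝ)^(2*j)*((k:ℝ)+1)^(2*k+1)) * (((k:ℝ)+1)^2 * Cnew^2) := by rw [hsq]
        _ = (8*((k:ℝ)+1)*(j:ℝ)*Cnew^2*((k:ℝ)+1)^(2*(k+1))*(j:ℝ)^(2*j)) * (k:ℝ)^(2*k+1) := by
            rw [show 2*(k+1) = (2*k+1)+1 by ring, show 2*k+1 = 2*k+1 from rfl]
            rw [pow_succ, pow_succ]
            ring
    have final : ((k:ℝ)+(j:ℝ)+1)^(2*(k+j)+3) * (k:ℝ)^(2*k+1)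
        ≤ (8*((k:ℝ)+1)*(j:ℝ)*Cnew^2*((k:ℝ)+1)^(2*(k+1))*(j:ℝ)^(2*j)) * (k:ℝ)^(2*k+1) := by
      calc ((k:ℝ)+(j:ℝ)+1)^(2*(k+j)+3) * (k:ℝ)^(2*k+1)
          = (k:ℝ)^(2*k+1) * ((k:ℝ)+(j:ℝ)+1)^(2*(k+j)+3) := by ring
        _ ≤ ((k:ℝ)+(j:ℝ)+1)^2 * (((k:ℝ)+1)^(2*k+1) * ((k:ℝ)+(j:ℝ))^(2*(k+j)+1)) := step1
        _ ≤ ((k:ℝ)+(j:ℝ)+1)^2 * (((k:ℝ)+1)^(2*k+1) * (8*(k:ℝ)*(j:ℝ)*Cold^2*(k:ℝ)^(2*k)*(j:ℝ)^(2*j))) := step2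
        _ = _ := E
    have final2 := le_of_mul_le_mul_right (by exact final) hkpos
    have egoal : (((k+1:ℕ)):ℝ)+(j:ℝ) = (k:ℝ)+(j:ℝ)+1 := by push_cast; ring
    push_cast
    calc ((k:ℝ)+1+(j:ℝ))^(2*(k+1+j)+1)
        = ((k:ℝ)+(j:ℝ)+1)^(2*(k+j)+3) := by rw [show 2*(k+1+j)+1 = 2*(k+j)+3 by ring]; ring_nf
      _ ≤ 8*((k:ℝ)+1)*(j:ℝ)*Cnew^2*((k:ℝ)+1)^(2*(k+1))*(j:ℝ)^(2*j) := final2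
      _ = 8*((k:ℝ)+1)*(j:ℝ)*Cnew^2*((k:ℝ)+1)^(2*(k+1))*(j:ℝ)^(2*j) := rfl

noncomputable def tailF (n : ℕ) (p : ℝ) (a : ℕ) : ℝ :=
  (a:ℝ) * (n.choose a : ℝ) * p ^ a * (1 - p) ^ (n - a + 1)

lemma term_id (n : ℕ) (p : ℝ) (k : ℕ) (hk : k ≤ n) :
    ((k:ℝ) - n*p) * binomialPMF n p k = tailF n p k - tailF n p (k+1) := by
  rcases Nat.lt_or_ge k n with h | h
  · obtain ⟨d, hd⟩ : ∃ d, n = k + d + 1 := ⟨n - k - 1, by omega⟩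
    subst hd
    have hch : (((k+d+1).choose (k+1) : ℕ):ℝ) * ((k:ℝ)+1) = (((k+d+1).choose k : ℕ):ℝ) * ((d:ℝ)+1) := by
      have h2 := Nat.choose_succ_right_eq (k+d+1) k
      have h3 : k + d + 1 - k = d + 1 := by omega
      rw [h3] at h2
      exact_mod_cast congrArg (fun x : ℕ => (x:ℝ)) h2
    unfold binomialPMF tailF
    have e1 : k + d + 1 - k = d + 1 := by omega
    have e3 : k + d + 1 - (k+1) + 1 = d + 1 := by omega
    rw [e1, e3]
    push_cast
    linear_combination (p^(k+1)*(1-p)^(d+1)) * hch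
  · have hkn : k = n := le_antisymm hk h
    subst hkn
    unfold binomialPMF tailF
    rw [Nat.choose_self, Nat.choose_eq_zero_of_lt (Nat.lt_succ_self k)]
    simp only [Nat.sub_self, Nat.cast_one, Nat.cast_zero]
    rw [show k - (k+1) + 1 = 1 by omega]
    ring

lemma tail_sum (n : ℕ) (p : ℝ) (a : ℕ) (ha : a ≤ n+1) :
    ∑ k ∈ Finset.Ico a (n+1), ((k:ℝ) - n*p) * binomialPMF n p k = tailF n p a := by
  have hsub : ∀ m, m ≤ n+1 → ∑ k ∈ Finset.range m, ((k:ℝ) - n*p) * binomialPMF n p k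
      = tailF n p 0 - tailF n p m := by
    intro m hm
    have : ∀ k ∈ Finset.range m, ((k:ℝ) - n*p) * binomialPMF n p k
        = tailF n p k - tailF n p (k+1) := by
      intro k hk
      exact term_id n p k (by simp at hk; omega)
    rw [Finset.sum_congr rfl this, Finset.sum_range_sub']
  have h1 := hsub (n+1) le_rfl
  have h2 := hsub a ha
  have hz : tailF n p (n+1) = 0 := by
    unfold tailF
    rw [Nat.choose_eq_zero_of_lt (Nat.lt_succ_self n)]
    simp
  rw [Finset.range_eq_Ico] at h1 h2
  have := Finset.sum_Ico_consecutive (fun k => ((k:ℝ) - n*p) * binomialPMF n p k)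
    (Nat.zero_le a) ha
  have h0 : tailF n p 0 = 0 := by unfold tailF; simp
  rw [← this, h2] at h1
  rw [hz, h0] at h1
  rw [h0] at h2
  linarith

lemma deMoivre (n : ℕ) (p : ℝ) (hp0 : 0 ≤ p) (hp1 : p ≤ 1) (a : ℕ) (ha : a ≤ n)
    (hlow : ∀ k : ℕ, k < a → (k:ℝ) ≤ n*p) (hhigh : (n:ℝ)*p ≤ a) :
    ∑ k ∈ Finset.range (n+1), |(k:ℝ) - n*p| * binomialPMF n p k = 2 * tailF n p a := by
  have hpmf : ∀ k, 0 ≤ binomialPMF n p k := by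
    intro k
    unfold binomialPMF
    have : (0:ℝ) ≤ 1 - p := by linarith
    positivity
  have hsplit := Finset.sum_Ico_consecutive (fun k => |(k:ℝ) - n*p| * binomialPMF n p k)
    (Nat.zero_le a) (by omega : a ≤ n+1)
  rw [Finset.range_eq_Ico, ← hsplit]
  have hlowsum : ∑ k ∈ Finset.Ico 0 a, |(k:ℝ) - n*p| * binomialPMF n p k
      = -∑ k ∈ Finset.Ico 0 a, ((k:ℝ) - n*p) * binomialPMF n p k := by
    rw [← Finset.sum_neg_distrib]
    apply Finset.sum_congr rfl
    intro k hk
    simp only [Finset.mem_Ico] at hk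
    rw [abs_of_nonpos (by linarith [hlow k hk.2])]
    ring
  have hhighsum : ∑ k ∈ Finset.Ico a (n+1), |(k:ℝ) - n*p| * binomialPMF n p k
      = ∑ k ∈ Finset.Ico a (n+1), ((k:ℝ) - n*p) * binomialPMF n p k := by
    apply Finset.sum_congr rfl
    intro k hk
    simp only [Finset.mem_Ico] at hk
    have : (a:ℝ) ≤ (k:ℝ) := by exact_mod_cast hk.1
    rw [abs_of_nonneg (by linarith)]
  have hIco0 : ∑ k ∈ Finset.Ico 0 a, ((k:ℝ) - n*p) * binomialPMF n p k = - tailF n p a := by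
    have hall := tail_sum n p 0 (by omega)
    have hA := tail_sum n p a (by omega)
    have := Finset.sum_Ico_consecutive (fun k => ((k:ℝ) - n*p) * binomialPMF n p k)
      (Nat.zero_le a) (by omega : a ≤ n+1)
    have h0 : tailF n p 0 = 0 := by unfold tailF; simp
    rw [h0] at hall
    rw [← this, hA] at hall
    linarith
  rw [hlowsum, hhighsum, hIco0, tail_sum n p a (by omega)]
  ring

lemma endpoint_min (α β : ℕ) (L R x : ℝ) (hL : 0 < L) (hR : R < 1) (hLR : L ≤ R)
    (hx1 : L ≤ x) (hx2 : x ≤ R) :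
    min (L^α * (1-L)^β) (R^α * (1-R)^β) ≤ x^α * (1-x)^β := by
  rcases eq_or_lt_of_le hLR with heq | hlt
  · subst heq
    have : x = L := le_antisymm hx2 hx1
    subst this
    exact min_le_left _ _
  · set t : ℝ := (x - L)/(R - L) with ht
    have hRL : 0 < R - L := by linarith
    have ht0 : 0 ≤ t := div_nonneg (by linarith) hRL.le
    have ht1 : t ≤ 1 := by rw [ht, div_le_one hRL]; linarith
    have hw : (1-t) + t = 1 := by ring
    have hxeq : x = (1-t)*L + t*R := by
      rw [ht]; field_simp; ring
    have hx1eq : 1 - x = (1-t)*(1-L) + t*(1-R) := by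
      rw [hxeq]; ring
    have h1L : 0 < 1 - L := by linarith
    have h1R : 0 < 1 - R := by linarith
    have hRpos : 0 < R := lt_of_lt_of_le hL hLR
    have g1 : L ^ (1-t) * R ^ t ≤ x := by
      rw [hxeq]
      exact Real.geom_mean_le_arith_mean2_weighted (by linarith) ht0 hL.le hRpos.le hw
    have g2 : (1-L) ^ (1-t) * (1-R) ^ t ≤ 1 - x := by
      rw [hx1eq]
      exact Real.geom_mean_le_arith_mean2_weighted (by linarith) ht0 h1L.le h1R.le hw
    have hxpos : 0 < x := lt_of_lt_of_le hL hx1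
    have hx1pos : 0 < 1 - x := by linarith
    have hg1pos : 0 < L ^ (1-t) * R ^ t := by positivity
    have hg2pos : 0 < (1-L) ^ (1-t) * (1-R) ^ t := by positivity
    have step : (L ^ (1-t) * R ^ t)^α * ((1-L) ^ (1-t) * (1-R) ^ t)^β ≤ x^α * (1-x)^β := by
      apply mul_le_mul (pow_le_pow_left₀ hg1pos.le g1 α) (pow_le_pow_left₀ hg2pos.le g2 β)
        (by positivity) (by positivity)
    refine le_trans ?_ step
    have hA : 0 < L^α * (1-L)^β := by positivity
    have hB : 0 < R^α * (1-R)^β := by positivity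
    have swap : ∀ (a : ℝ), 0 < a → ∀ (w : ℝ) (m : ℕ), (a^w)^m = (a^m:ℝ)^w := by
      intro a h w m
      rw [← Real.rpow_natCast (a^w) m, ← Real.rpow_natCast a m,
        ← Real.rpow_mul h.le, ← Real.rpow_mul h.le, mul_comm]
    have key : (L^α * (1-L)^β) ^ (1-t) * (R^α * (1-R)^β) ^ t
        = (L ^ (1-t) * R ^ t)^α * ((1-L) ^ (1-t) * (1-R) ^ t)^β := by
      rw [mul_pow, mul_pow, swap L hL, swap R hRpos, swap (1-L) h1L, swap (1-R) h1R,
        Real.mul_rpow (by positivity) (by positivity),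
        Real.mul_rpow (by positivity) (by positivity)]
      ring
    rw [← key] at step ⊢
    calc min (L^α * (1-L)^β) (R^α * (1-R)^β)
        = (min (L^α * (1-L)^β) (R^α * (1-R)^β)) ^ (1-t)
          * (min (L^α * (1-L)^β) (R^α * (1-R)^β)) ^ t := by
          rw [← Real.rpow_add (lt_min hA hB), hw, Real.rpow_one]
      _ ≤ (L^α * (1-L)^β) ^ (1-t) * (R^α * (1-R)^β) ^ t := by
          apply mul_le_mul
          · exact Real.rpow_le_rpow (le_min hA.le hB.le) (min_le_left _ _) (by linarith)
          · exact Real.rpow_le_rpow (le_min hA.le hB.le) (min_le_right _ _) ht0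
          · positivity
          · positivity

lemma conv_helper (nn : ℕ) (hn : 0 < nn) (E u v : ℝ) (α β : ℕ) (hαβ : α + β = 2*nn)
    (h : ((nn:ℝ))^(2*nn+1) ≤ E * u^α * v^β) :
    (nn:ℝ) ≤ E * (u/nn)^α * (v/nn)^β := by
  have hnR : (0:ℝ) < nn := by exact_mod_cast hn
  have e : E * (u/(nn:ℝ))^α * (v/(nn:ℝ))^β = (E*u^α*v^β)/(nn:ℝ)^(2*nn) := by
    rw [div_pow, div_pow, ← hαβ, pow_add]
    field_simp
  rw [e, le_div_iff₀ (by positivity)]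
  calc (nn:ℝ) * (nn:ℝ)^(2*nn) = (nn:ℝ)^(2*nn+1) := by rw [pow_succ]; ring
    _ ≤ E*u^α*v^β := h

theorem binomial_mad_lower_bound
    (n : ℕ) (hn : 2 ≤ n) (p : ℝ)
    (hp : 1 / (n : ℝ) ≤ p) (hp1 : p ≤ 1 - 1 / (n : ℝ)) :
    ∑ k ∈ Finset.range (n + 1), |(k : ℝ) - n * p| * binomialPMF n p k
      ≥ Real.sqrt (n * p * (1 - p) / 2) := by
  have hnR : (0:ℝ) < n := by positivity
  have hp0 : 0 < p := lt_of_lt_of_le (by positivity) hp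
  have hq0 : 0 < 1 - p := by
    have : 1/(n:ℝ) > 0 := by positivity
    linarith
  have hnp1 : 1 ≤ (n:ℝ)*p := by
    have := mul_le_mul_of_nonneg_left hp hnR.le
    rwa [mul_one_div, div_self hnR.ne'] at this
  have hnpn : (n:ℝ)*p ≤ n - 1 := by
    have := mul_le_mul_of_nonneg_left hp1 hnR.le
    have e : (n:ℝ)*(1 - 1/n) = n - 1 := by field_simp
    linarith [e ▸ this]
  set m : ℕ := ⌊(n:ℝ)*p⌋₊ with hm
  have hfl : (m:ℝ) ≤ (n:ℝ)*p := Nat.floor_le (by positivity)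
  have hflt : (n:ℝ)*p < (m:ℝ) + 1 := Nat.lt_floor_add_one _
  have hm1 : 1 ≤ m := Nat.le_floor (by exact_mod_cast hnp1)
  have hmn : m + 1 ≤ n := by
    have : (m:ℝ) + 1 ≤ (n:ℝ) := by linarith
    exact_mod_cast this
  obtain ⟨j, hnj⟩ : ∃ j, n = (m+1) + j := ⟨n - (m+1), by omega⟩
  set a : ℕ := m + 1 with ha
  have han : a ≤ n := hmn
  have hmR : (1:ℝ) ≤ (m:ℝ) := by exact_mod_cast hm1
  -- De Moivre
  have hDM := deMoivre n p hp0.le (by linarith) a han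
    (fun k hk => by
      have : (k:ℝ) ≤ (m:ℝ) := by exact_mod_cast Nat.lt_succ_iff.mp hk
      linarith)
    (by rw [ha]; push_cast; linarith)
  rw [ge_iff_le, hDM]
  -- key inequality
  set C : ℝ := ((n.choose a : ℕ):ℝ) with hC
  have hCpos : 0 < C := by
    rw [hC]
    exact_mod_cast Nat.choose_pos han
  have key : (n:ℝ) ≤ 8*((a:ℕ):ℝ)^2*C^2*p^(2*m+1)*(1-p)^(2*j+1) := by
    rcases Nat.eq_zero_or_pos j with hj0 | hj1
    · -- a = n, p = 1 - 1/n = m/n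
      subst hj0
      have hnm : n = m + 1 := by omega
      have hpeq : p = (m:ℝ)/n := by
        have h1 : p ≤ 1 - 1/(n:ℝ) := hp1
        have h2 : (1:ℝ) - 1/n = (m:ℝ)/n := by
          rw [hnm]; push_cast; field_simp; ring
        have h3 : (m:ℝ)/n ≤ p := by
          rw [div_le_iff₀ hnR]; linarith [hfl]
        linarith [h2 ▸ h1, h3]
      have hqeq : 1 - p = 1/(n:ℝ) := by
        rw [hpeq]
        rw [hnm]; push_cast; field_simp; ring
      rw [hqeq, hpeq]
      have hst := star 1 le_rfl m hm1
      rw [Nat.choose_succ_self_right] at hst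
      push_cast at hst
      have hchn : C = 1 := by
        rw [hC, show a = n from by omega, Nat.choose_self]; norm_num
      rw [hchn]
      have : ((n:ℝ))^(2*n+1) ≤ 8*((a:ℕ):ℝ)^2*1^2*(m:ℝ)^(2*m+1)*(1:ℝ)^(2*0+1) := by
        have e1 : (m:ℝ)+1 = (n:ℝ) := by rw [hnm]; push_cast; ring
        have e2 : m + 1 = n := by omega
        rw [e2] at hst
        calc ((n:ℝ))^(2*n+1) ≤ 8*(m:ℝ)*1*((n:ℝ))^2*(m:ℝ)^(2*m)*1^(2*1) := by
              rw [← e1]; convert hst using 2 <;> push_cast <;> ring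
          _ = 8*((a:ℕ):ℝ)^2*1^2*(m:ℝ)^(2*m+1)*(1:ℝ)^(2*0+1) := by
              have e3 : ((a:ℕ):ℝ) = (n:ℝ) := by rw [show a = n from by omega]
              rw [e3, pow_succ]; ring
      have hconv := conv_helper n (by omega) (8*((a:ℕ):ℝ)^2*1^2) (m:ℝ) 1 (2*m+1) (2*0+1)
        (by omega) this
      calc (n:ℝ) ≤ 8*((a:ℕ):ℝ)^2*1^2*((m:ℝ)/n)^(2*m+1)*((1:ℝ)/n)^(2*0+1) := hconv
        _ = 8*((a:ℕ):ℝ)^2*1^2*((m:ℝ)/n)^(2*m+1)*((1:ℝ)/n)^(2*0+1) := rfl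
    · -- 1 ≤ j : endpoints m/n and (m+1)/n
      have hjR : (1:ℝ) ≤ (j:ℝ) := by exact_mod_cast hj1
      set L : ℝ := (m:ℝ)/n with hL
      set R : ℝ := ((m:ℝ)+1)/n with hR
      have hLpos : 0 < L := by positivity
      have hRlt : R < 1 := by
        rw [hR, div_lt_one hnR]
        have : (m:ℝ) + 1 + (j:ℝ) ≤ (n:ℝ) := by
          rw [hnj, ha]; push_cast; linarith
        linarith
      have hLR : L ≤ R := by
        rw [hL, hR]
        gcongr
        linarith
      have hnR' : (n:ℝ) = (m:ℝ)+1+(j:ℝ) := by rw [hnj, ha]; push_cast; ring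
      have hLp : L ≤ p := by rw [hL, div_le_iff₀ hnR]; nlinarith [hfl]
      have hpR : p ≤ R := by rw [hR, le_div_iff₀ hnR]; nlinarith [hflt]
      have hmin := endpoint_min (2*m+1) (2*j+1) L R p hLpos hRlt hLR hLp hpR
      have haR : ((a:ℕ):ℝ) = (m:ℝ)+1 := by rw [ha]; push_cast; ring
      -- left endpoint bound
      have hch : C*((m:ℝ)+1) = ((n.choose m : ℕ):ℝ)*((j:ℝ)+1) := by
        have h2 := Nat.choose_succ_right_eq n m
        rw [show n - m = j + 1 from by omega] at h2
        rw [hC]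
        exact_mod_cast congrArg (fun x : ℕ => (x:ℝ)) h2
      have hsq : C^2*((m:ℝ)+1)^2 = ((n.choose m : ℕ):ℝ)^2*((j:ℝ)+1)^2 := by
        rw [← mul_pow, ← mul_pow, hch]
      have hstL := star (j+1) (by omega) m hm1
      rw [show m + (j+1) = n from by omega] at hstL
      push_cast at hstL
      have hXL' : (n:ℝ)^(2*n+1) ≤ 8*((a:ℕ):ℝ)^2*C^2 * (m:ℝ)^(2*m+1) * ((j:ℝ)+1)^(2*j+1) := by
        have e0 : ((m:ℝ)+((j:ℝ)+1))^(2*n+1) = (n:ℝ)^(2*n+1) := by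
          rw [show (m:ℝ)+((j:ℝ)+1) = (n:ℝ) by rw [hnR']; ring]
        calc (n:ℝ)^(2*n+1) = ((m:ℝ)+((j:ℝ)+1))^(2*n+1) := e0.symm
          _ ≤ 8*(m:ℝ)*((j:ℝ)+1)*((n.choose m : ℕ):ℝ)^2*(m:ℝ)^(2*m)*((j:ℝ)+1)^(2*(j+1)) := by
              convert hstL using 2
          _ = 8*(m:ℝ)^(2*m+1)*((j:ℝ)+1)^(2*j+1)*(((n.choose m : ℕ):ℝ)^2*((j:ℝ)+1)^2) := by
              rw [show 2*(j+1) = (2*j+1)+1 by ring]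
              rw [pow_succ ((j:ℝ)+1) (2*j+1), pow_succ (m:ℝ) (2*m)]
              ring
          _ = 8*(m:ℝ)^(2*m+1)*((j:ℝ)+1)^(2*j+1)*(C^2*((m:ℝ)+1)^2) := by rw [hsq]
          _ = 8*((a:ℕ):ℝ)^2*C^2 * (m:ℝ)^(2*m+1) * ((j:ℝ)+1)^(2*j+1) := by
              rw [haR]; ring
      have XL := conv_helper n (by omega) (8*((a:ℕ):ℝ)^2*C^2) (m:ℝ) ((j:ℝ)+1)
        (2*m+1) (2*j+1) (by omega) hXL'
      have e1L : ((j:ℝ)+1)/(n:ℝ) = 1 - L := by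
        rw [hL]; field_simp; linarith [hnR']
      rw [e1L, ← hL] at XL
      -- right endpoint bound
      have hstR := star j hj1 (m+1) (by omega)
      rw [show (m+1) + j = n from by omega] at hstR
      push_cast at hstR
      have hXR' : (n:ℝ)^(2*n+1) ≤ 8*((a:ℕ):ℝ)^2*C^2 * ((m:ℝ)+1)^(2*m+1) * ((j:ℝ))^(2*j+1) := by
        have e0 : ((m:ℝ)+1+(j:ℝ))^(2*n+1) = (n:ℝ)^(2*n+1) := by
          rw [show (m:ℝ)+1+(j:ℝ) = (n:ℝ) by rw [hnR']]
        have hCC : ((n.choose (m+1) : ℕ):ℝ) = C := by rw [hC]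
        calc (n:ℝ)^(2*n+1) = ((m:ℝ)+1+(j:ℝ))^(2*n+1) := e0.symm
          _ ≤ 8*((m:ℝ)+1)*(j:ℝ)*((n.choose (m+1) : ℕ):ℝ)^2*((m:ℝ)+1)^(2*(m+1))*(j:ℝ)^(2*j) := by
              convert hstR using 2
          _ = 8*((a:ℕ):ℝ)^2*C^2 * ((m:ℝ)+1)^(2*m+1) * ((j:ℝ))^(2*j+1) := by
              rw [hCC, haR]
              rw [show 2*(m+1) = (2*m+1)+1 by ring]
              rw [pow_succ ((m:ℝ)+1) (2*m+1), pow_succ (j:ℝ) (2*j)]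
              ring
      have XR := conv_helper n (by omega) (8*((a:ℕ):ℝ)^2*C^2) ((m:ℝ)+1) ((j:ℝ))
        (2*m+1) (2*j+1) (by omega) hXR'
      have e1R : ((j:ℝ))/(n:ℝ) = 1 - R := by
        rw [hR]; field_simp; linarith [hnR']
      rw [e1R, ← hR] at XR
      -- combine
      have hE0 : (0:ℝ) ≤ 8*((a:ℕ):ℝ)^2*C^2 := by positivity
      have key0 : (n:ℝ) ≤ 8*((a:ℕ):ℝ)^2*C^2 * (p^(2*m+1)*(1-p)^(2*j+1)) := by
        rcases min_cases (L^(2*m+1)*(1-L)^(2*j+1)) (R^(2*m+1)*(1-R)^(2*j+1)) with ⟨hmeq, _⟩ | ⟨hmeq, _⟩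
        · calc (n:ℝ) ≤ 8*((a:ℕ):ℝ)^2*C^2 * L^(2*m+1) * (1-L)^(2*j+1) := XL
            _ = 8*((a:ℕ):ℝ)^2*C^2 * (L^(2*m+1)*(1-L)^(2*j+1)) := by ring
            _ = 8*((a:ℕ):ℝ)^2*C^2 * min (L^(2*m+1)*(1-L)^(2*j+1)) (R^(2*m+1)*(1-R)^(2*j+1)) := by rw [hmeq]
            _ ≤ 8*((a:ℕ):ℝ)^2*C^2 * (p^(2*m+1)*(1-p)^(2*j+1)) := by
                exact mul_le_mul_of_nonneg_left hmin hE0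
        · calc (n:ℝ) ≤ 8*((a:ℕ):ℝ)^2*C^2 * R^(2*m+1) * (1-R)^(2*j+1) := XR
            _ = 8*((a:ℕ):ℝ)^2*C^2 * (R^(2*m+1)*(1-R)^(2*j+1)) := by ring
            _ = 8*((a:ℕ):ℝ)^2*C^2 * min (L^(2*m+1)*(1-L)^(2*j+1)) (R^(2*m+1)*(1-R)^(2*j+1)) := by rw [hmeq]
            _ ≤ 8*((a:ℕ):ℝ)^2*C^2 * (p^(2*m+1)*(1-p)^(2*j+1)) := by
                exact mul_le_mul_of_nonneg_left hmin hE0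
      calc (n:ℝ) ≤ 8*((a:ℕ):ℝ)^2*C^2 * (p^(2*m+1)*(1-p)^(2*j+1)) := key0
        _ = 8*((a:ℕ):ℝ)^2*C^2*p^(2*m+1)*(1-p)^(2*j+1) := by ring
  -- final: from key to sqrt bound
  have htail : tailF n p a = ((a:ℕ):ℝ)*C*p^a*(1-p)^(j+1) := by
    unfold tailF
    rw [show n - a + 1 = j + 1 from by omega, ← hC]
  have hT0 : 0 ≤ 2 * tailF n p a := by
    rw [htail]
    have : (0:ℝ) ≤ 1 - p := hq0.le
    positivity
  have hsqle : (n:ℝ)*p*(1-p)/2 ≤ (2 * tailF n p a)^2 := by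
    have hmul := mul_le_mul_of_nonneg_right key (show (0:ℝ) ≤ p*(1-p)/2 by positivity)
    rw [htail]
    calc (n:ℝ)*p*(1-p)/2 = (n:ℝ) * (p*(1-p)/2) := by ring
      _ ≤ 8*((a:ℕ):ℝ)^2*C^2*p^(2*m+1)*(1-p)^(2*j+1) * (p*(1-p)/2) := hmul
      _ = (2*(((a:ℕ):ℝ)*C*p^a*(1-p)^(j+1)))^2 := by
          rw [ha]
          push_cast
          ring
      _ = (2 * (((a:ℕ):ℝ)*C*p^a*(1-p)^(j+1)))^2 := by ring
  calc Real.sqrt ((n:ℝ)*p*(1-p)/2) ≤ Real.sqrt ((2*tailF n p a)^2) := Real.sqrt_le_sqrt hsqle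
    _ = 2 * tailF n p a := Real.sqrt_sq hT0
end

section
/- For fixed positive integers n and k < m ≤ n, the function p ↦ P[Bin(n,p) ≥ m] / P[Bin(n,p) ≥ k] is monotone increasing on (0,1). -/
/-- The upper tail `P[Bin(n,p) ≥ m]`. -/
noncomputable def binomialTail (n : ℕ) (p : ℝ) (m : ℕ) : ℝ :=
  ∑ j ∈ Finset.Icc m n, binomialPMF n p j

lemma binomialPMF_pos_s11 {n j : ℕ} {p : ℝ} (hp : p ∈ Set.Ioo (0:ℝ) 1) (hj : j ≤ n) :
    0 < binomialPMF n p j := by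
  obtain ⟨hp0, hp1⟩ := hp
  have h1p : (0:ℝ) < 1 - p := by linarith
  have hc : (0:ℝ) < (n.choose j : ℝ) := by exact_mod_cast Nat.choose_pos hj
  unfold binomialPMF
  positivity

lemma binomialTail_pos {n m : ℕ} {p : ℝ} (hp : p ∈ Set.Ioo (0:ℝ) 1) (hm : m ≤ n) :
    0 < binomialTail n p m := by
  apply Finset.sum_pos
  · intro i hi
    exact binomialPMF_pos_s11 hp (Finset.mem_Icc.mp hi).2
  · exact ⟨m, Finset.mem_Icc.mpr ⟨le_refl m, hm⟩⟩

/-- The likelihood ratio inequality for the binomial pmf. -/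
lemma binomialPMF_cross {n i j : ℕ} {p q : ℝ} (hp : p ∈ Set.Ioo (0:ℝ) 1)
    (hq : q ∈ Set.Ioo (0:ℝ) 1) (hpq : p < q) (hji : j < i) (hin : i ≤ n) :
    binomialPMF n p i * binomialPMF n q j < binomialPMF n p j * binomialPMF n q i := by
  obtain ⟨hp0, hp1⟩ := hp
  obtain ⟨hq0, hq1⟩ := hq
  have hjn : j ≤ n := le_of_lt (lt_of_lt_of_le hji hin)
  have hci : (0:ℝ) < (n.choose i : ℝ) := by exact_mod_cast Nat.choose_pos hin
  have hcj : (0:ℝ) < (n.choose j : ℝ) := by exact_mod_cast Nat.choose_pos hjn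
  set d := i - j with hd
  have hid : i = j + d := by omega
  have hnj : n - j = (n - i) + d := by omega
  have h1p : (0:ℝ) < 1 - p := by linarith
  have h1q : (0:ℝ) < 1 - q := by linarith
  have hcore : (p * (1 - q)) ^ d < ((1 - p) * q) ^ d := by
    apply pow_lt_pow_left₀ _ (by positivity) (by omega)
    nlinarith
  have e1 : ∀ x : ℝ, x ^ i = x ^ j * x ^ d := fun x => by rw [hid, pow_add]
  have e2 : ∀ x : ℝ, x ^ (n - j) = x ^ (n - i) * x ^ d := fun x => by rw [hnj, pow_add]
  have hcommon : (0:ℝ) < (n.choose i : ℝ) * (n.choose j : ℝ) * p ^ j * q ^ j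
      * (1 - p) ^ (n - i) * (1 - q) ^ (n - i) := by positivity
  unfold binomialPMF
  calc (n.choose i : ℝ) * p ^ i * (1 - p) ^ (n - i)
        * ((n.choose j : ℝ) * q ^ j * (1 - q) ^ (n - j))
      = ((n.choose i : ℝ) * (n.choose j : ℝ) * p ^ j * q ^ j
          * (1 - p) ^ (n - i) * (1 - q) ^ (n - i)) * (p * (1 - q)) ^ d := by
        rw [e1 p, e2 (1 - q), mul_pow]; ring
    _ < ((n.choose i : ℝ) * (n.choose j : ℝ) * p ^ j * q ^ j
          * (1 - p) ^ (n - i) * (1 - q) ^ (n - i)) * ((1 - p) * q) ^ d :=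
        mul_lt_mul_of_pos_left hcore hcommon
    _ = (n.choose j : ℝ) * p ^ j * (1 - p) ^ (n - j)
        * ((n.choose i : ℝ) * q ^ i * (1 - q) ^ (n - i)) := by
        rw [e1 q, e2 (1 - p), mul_pow]; ring

/-- For `k < m ≤ n`, the map `p ↦ P[Bin(n,p) ≥ m] / P[Bin(n,p) ≥ k]`
is monotone increasing on `(0,1)`. -/
theorem binomial_tail_ratio_strictMono
    (n k m : ℕ) (hn : 0 < n) (hkm : k < m) (hmn : m ≤ n) :
    StrictMonoOn (fun p : ℝ => binomialTail n p m / binomialTail n p k)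
      (Set.Ioo (0 : ℝ) 1) := by
  intro p hp q hq hpq
  have hkn : k ≤ n := le_of_lt (lt_of_lt_of_le hkm hmn)
  have hTkp : 0 < binomialTail n p k := binomialTail_pos hp hkn
  have hTkq : 0 < binomialTail n q k := binomialTail_pos hq hkn
  simp only
  rw [div_lt_div_iff₀ hTkp hTkq]
  -- split tail at m
  have hm1 : 1 ≤ m := by omega
  have hsplit : ∀ x : ℝ, binomialTail n x k
      = (∑ j ∈ Finset.Icc k (m-1), binomialPMF n x j) + binomialTail n x m := by
    intro x
    unfold binomialTail
    have hU : Finset.Icc k (m-1) ∪ Finset.Ioc (m-1) n = Finset.Icc k n := by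
      ext a; simp only [Finset.mem_union, Finset.mem_Icc, Finset.mem_Ioc]; omega
    have hIoc : Finset.Ioc (m-1) n = Finset.Icc m n := by
      ext a; simp only [Finset.mem_Ioc, Finset.mem_Icc]; omega
    have hdisj : Disjoint (Finset.Icc k (m-1)) (Finset.Ioc (m-1) n) := by
      rw [Finset.disjoint_left]
      intro a ha hb
      simp only [Finset.mem_Icc, Finset.mem_Ioc] at ha hb
      omega
    rw [← hU, Finset.sum_union hdisj, hIoc]
  -- key cross-sum inequality
  have key : binomialTail n p m * (∑ j ∈ Finset.Icc k (m-1), binomialPMF n q j)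
      < (∑ j ∈ Finset.Icc k (m-1), binomialPMF n p j) * binomialTail n q m := by
    unfold binomialTail
    rw [Finset.sum_mul_sum, Finset.sum_mul_sum, Finset.sum_comm]
    apply Finset.sum_lt_sum_of_nonempty ⟨k, Finset.mem_Icc.mpr (by omega)⟩
    intro j hj
    apply Finset.sum_lt_sum_of_nonempty ⟨m, Finset.mem_Icc.mpr (by omega)⟩
    intro i hi
    simp only [Finset.mem_Icc] at hi hj
    exact binomialPMF_cross hp hq hpq (by omega) (by omega)
  rw [hsplit p, hsplit q]
  nlinarith [key]
end

section
/- If P_λ is a Poisson random variable with mean λ > 0, then E[|P_λ − λ|] = 2λ · e^{−λ} λ^{⌊λ⌋} / ⌊λ⌋!. -/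
/-- The Poisson probability mass function: `P[Poi(λ) = k]`. -/
noncomputable def poissonPMF (lam : ℝ) (k : ℕ) : ℝ :=
  Real.exp (-lam) * lam ^ k / (Nat.factorial k)

lemma poissonPMF_hasSum (lam : ℝ) : HasSum (poissonPMF lam) 1 := by
  unfold poissonPMF
  apply (hasSum_mul_left_iff (Real.exp_ne_zero lam)).mp
  simp only [mul_one]
  have h : (fun i ↦ Real.exp lam * (Real.exp (-lam) * lam ^ i / (Nat.factorial i : ℝ))) =
      fun i ↦ lam ^ i / (Nat.factorial i : ℝ) := by
    ext n
    rw [mul_div_assoc, Real.exp_neg, ← mul_assoc, ← div_eq_mul_inv,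
      div_self (Real.exp_ne_zero lam), one_mul]
  rw [h, Real.exp_eq_exp_ℝ]
  exact NormedSpace.expSeries_div_hasSum_exp lam

lemma poissonPMF_succ (lam : ℝ) (j : ℕ) :
    ((j : ℝ) + 1) * poissonPMF lam (j + 1) = lam * poissonPMF lam j := by
  unfold poissonPMF
  rw [Nat.factorial_succ]
  have h1 : ((Nat.factorial j : ℝ)) ≠ 0 := Nat.cast_ne_zero.mpr (Nat.factorial_pos j).ne'
  have h2 : ((j : ℝ) + 1) ≠ 0 := by positivity
  push_cast
  field_simp
  ring

lemma poissonPMF_mul_hasSum (lam : ℝ) :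
    HasSum (fun k : ℕ => (k : ℝ) * poissonPMF lam k) lam := by
  have h : HasSum (fun j : ℕ => ((j : ℝ) + 1) * poissonPMF lam (j + 1)) lam := by
    have := (poissonPMF_hasSum lam).mul_left lam
    rw [mul_one] at this
    exact this.congr_fun fun j => poissonPMF_succ lam j
  have h2 : HasSum (fun j : ℕ => ((j + 1 : ℕ) : ℝ) * poissonPMF lam (j + 1)) lam := by
    simpa using h
  have := (hasSum_nat_add_iff (f := fun k : ℕ => (k : ℝ) * poissonPMF lam k) 1).mp h2
  simpa using this

/-- The mean absolute deviation of a Poisson random variable (Diaconis–Zabell). -/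
theorem poisson_mad_eq (lam : ℝ) (hlam : 0 < lam) :
    ∑' k : ℕ, |(k : ℝ) - lam| * poissonPMF lam k
      = 2 * lam * Real.exp (-lam) * lam ^ (Nat.floor lam) /
          (Nat.factorial (Nat.floor lam)) := by
  set m := Nat.floor lam with hm
  -- decomposition
  have hdecomp : ∀ k : ℕ, |(k : ℝ) - lam| * poissonPMF lam k
      = ((k : ℝ) - lam) * poissonPMF lam k
        + 2 * max (lam - k) 0 * poissonPMF lam k := by
    intro k
    rcases le_total ((k : ℝ)) lam with h | h
    · rw [abs_of_nonpos (by linarith), max_eq_left (by linarith)]; ring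
    · rw [abs_of_nonneg (by linarith), max_eq_right (by linarith)]; ring
  -- first part sums to 0
  have h1 : HasSum (fun k : ℕ => ((k : ℝ) - lam) * poissonPMF lam k) 0 := by
    have := (poissonPMF_mul_hasSum lam).sub ((poissonPMF_hasSum lam).mul_left lam)
    simpa [sub_mul, mul_one] using this
  -- second part: finitely supported
  have hsupp : ∀ k ∉ Finset.range (m + 1),
      2 * max (lam - k) 0 * poissonPMF lam k = 0 := by
    intro k hk
    rw [Finset.mem_range, not_lt] at hk
    have : lam < k := lt_of_lt_of_le (Nat.lt_floor_add_one lam) (by exact_mod_cast hk)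
    rw [max_eq_right (by linarith)]
    ring
  have h2 : HasSum (fun k : ℕ => 2 * max (lam - k) 0 * poissonPMF lam k)
      (∑ k ∈ Finset.range (m + 1), 2 * max (lam - k) 0 * poissonPMF lam k) :=
    hasSum_sum_of_ne_finset_zero hsupp
  -- evaluate the finite sum by telescoping
  have hmax : ∀ k ∈ Finset.range (m + 1), max (lam - (k : ℝ)) 0 = lam - k := by
    intro k hk
    rw [Finset.mem_range, Nat.lt_succ_iff] at hk
    have hk' : (k : ℝ) ≤ lam := le_trans (by exact_mod_cast hk) (Nat.floor_le hlam.le)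
    exact max_eq_left (by linarith)
  have htel : ∑ k ∈ Finset.range (m + 1), (lam - (k : ℝ)) * poissonPMF lam k
      = lam * poissonPMF lam m := by
    have hsplit : ∀ k : ℕ, (lam - (k : ℝ)) * poissonPMF lam k
        = lam * poissonPMF lam k - (k : ℝ) * poissonPMF lam k := by
      intro k; ring
    simp only [hsplit, Finset.sum_sub_distrib]
    have hshift : ∑ k ∈ Finset.range (m + 1), (k : ℝ) * poissonPMF lam k
        = ∑ j ∈ Finset.range m, lam * poissonPMF lam j := by
      rw [Finset.sum_range_succ']
      simp only [Nat.cast_zero, zero_mul, add_zero]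
      refine Finset.sum_congr rfl fun j _ => ?_
      have := poissonPMF_succ lam j
      push_cast
      linarith [poissonPMF_succ lam j]
    rw [hshift, Finset.sum_range_succ]
    ring
  -- combine
  have hsum2 : ∑ k ∈ Finset.range (m + 1), 2 * max (lam - k) 0 * poissonPMF lam k
      = 2 * lam * poissonPMF lam m := by
    calc ∑ k ∈ Finset.range (m + 1), 2 * max (lam - k) 0 * poissonPMF lam k
        = ∑ k ∈ Finset.range (m + 1), 2 * ((lam - k) * poissonPMF lam k) := by
          refine Finset.sum_congr rfl fun k hk => ?_
          rw [hmax k hk]; ring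
      _ = 2 * ∑ k ∈ Finset.range (m + 1), (lam - (k : ℝ)) * poissonPMF lam k := by
          rw [Finset.mul_sum]
      _ = 2 * (lam * poissonPMF lam m) := by rw [htel]
      _ = 2 * lam * poissonPMF lam m := by ring
  have htot : HasSum (fun k : ℕ => |(k : ℝ) - lam| * poissonPMF lam k)
      (2 * lam * poissonPMF lam m) := by
    have := h1.add h2
    rw [hsum2, zero_add] at this
    exact this.congr_fun fun k => hdecomp k
  rw [htot.tsum_eq]
  unfold poissonPMF
  ring
end

section
/- If P_λ is a Poisson random variable whose mean λ is a positive integer, then E[P_λ | P_λ ≥ λ] ≤ λ + √λ. -/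
lemma poissonPMF_eq (lam : ℝ) (k : ℕ) :
    poissonPMF lam k = Real.exp (-lam) * (lam ^ k / (Nat.factorial k)) := by
  unfold poissonPMF; ring

lemma poissonPMF_nonneg {lam : ℝ} (h : 0 ≤ lam) (k : ℕ) : 0 ≤ poissonPMF lam k := by
  unfold poissonPMF; positivity

lemma summable_mul1 (x : ℝ) :
    Summable (fun k : ℕ => (k : ℝ) * (x ^ k / (Nat.factorial k))) := by
  rw [← summable_nat_add_iff 1]
  have h : (fun k : ℕ => ((k + 1 : ℕ) : ℝ) * (x ^ (k + 1) / (Nat.factorial (k + 1))))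
      = fun k : ℕ => x * (x ^ k / (Nat.factorial k)) := by
    funext k
    have h1 : (Nat.factorial (k + 1) : ℝ) = (k + 1) * Nat.factorial k := by
      rw [Nat.factorial_succ]; push_cast; ring
    have h2 : (Nat.factorial k : ℝ) ≠ 0 := Nat.cast_ne_zero.2 (Nat.factorial_ne_zero k)
    have h3 : ((k : ℝ) + 1) ≠ 0 := by positivity
    rw [h1]
    push_cast
    field_simp
    ring
  rw [h]
  exact (Real.summable_pow_div_factorial x).mul_left x

lemma summable_mul2 (x : ℝ) :
    Summable (fun k : ℕ => ((k : ℝ)) ^ 2 * (x ^ k / (Nat.factorial k))) := by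
  rw [← summable_nat_add_iff 1]
  have h : (fun k : ℕ => (((k + 1 : ℕ) : ℝ)) ^ 2 * (x ^ (k + 1) / (Nat.factorial (k + 1))))
      = fun k : ℕ => x * ((k : ℝ) * (x ^ k / (Nat.factorial k))) + x * (x ^ k / (Nat.factorial k)) := by
    funext k
    have h1 : (Nat.factorial (k + 1) : ℝ) = (k + 1) * Nat.factorial k := by
      rw [Nat.factorial_succ]; push_cast; ring
    have h2 : (Nat.factorial k : ℝ) ≠ 0 := Nat.cast_ne_zero.2 (Nat.factorial_ne_zero k)
    have h3 : ((k : ℝ) + 1) ≠ 0 := by positivity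
    rw [h1]
    push_cast
    field_simp
    ring
  rw [h]
  exact (((summable_mul1 x).mul_left x).add ((Real.summable_pow_div_factorial x).mul_left x))

/-- If the mean `λ` of a Poisson random variable is a positive integer, then
`E[P_λ | P_λ ≥ λ] ≤ λ + √λ`. -/
theorem poisson_integer_mean_tail_cond_exp_le (lam : ℕ) (hlam : 0 < lam) :
    (∑' k : ℕ, if lam ≤ k then (k : ℝ) * poissonPMF lam k else 0) /
        (∑' k : ℕ, if lam ≤ k then poissonPMF lam k else 0)
      ≤ (lam : ℝ) + Real.sqrt lam := by
  set N : ℕ := lam with hN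
  have hx0 : (0 : ℝ) ≤ (N : ℝ) := Nat.cast_nonneg N
  set f : ℕ → ℝ := fun j => poissonPMF N (N + j) with hf
  have hf_nonneg : ∀ j, 0 ≤ f j := fun j => poissonPMF_nonneg hx0 _
  -- reindexing lemma
  have hreindex : ∀ g : ℕ → ℝ,
      (∑' k : ℕ, if N ≤ k then g k else 0) = ∑' j : ℕ, g (N + j) := by
    intro g
    have hinj : Function.Injective (fun j : ℕ => N + j) := fun a b h => by simpa using h
    have hsupp : Function.support (fun k : ℕ => if N ≤ k then g k else 0)
        ⊆ Set.range (fun j : ℕ => N + j) := by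
      intro k hk
      by_cases h : N ≤ k
      · exact ⟨k - N, by simp; omega⟩
      · simp [h] at hk
    have := hinj.tsum_eq hsupp
    rw [← this]
    congr 1
    funext j
    simp [Nat.le_add_right]
  -- basic summability
  have hg0 : Summable (fun k : ℕ => Real.exp (-(N:ℝ)) * ((N:ℝ) ^ k / (Nat.factorial k))) :=
    (Real.summable_pow_div_factorial _).mul_left _
  have hg1 : Summable (fun k : ℕ => Real.exp (-(N:ℝ)) * ((k:ℝ) * ((N:ℝ) ^ k / (Nat.factorial k)))) :=
    (summable_mul1 _).mul_left _
  have hg2 : Summable (fun k : ℕ => Real.exp (-(N:ℝ)) * ((k:ℝ)^2 * ((N:ℝ) ^ k / (Nat.factorial k)))) :=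
    (summable_mul2 _).mul_left _
  have hS : Summable f := by
    have := (summable_nat_add_iff (f := fun k : ℕ => Real.exp (-(N:ℝ)) * ((N:ℝ) ^ k / (Nat.factorial k))) N).2 hg0
    refine this.congr fun j => ?_
    simp only [hf, poissonPMF_eq, Nat.add_comm j N]
  have hM1 : Summable (fun j : ℕ => (j : ℝ) * f j) := by
    have hbig := (summable_nat_add_iff (f := fun k : ℕ =>
      Real.exp (-(N:ℝ)) * ((k:ℝ) * ((N:ℝ) ^ k / (Nat.factorial k)))) N).2 hg1
    refine Summable.of_nonneg_of_le (fun j => mul_nonneg (Nat.cast_nonneg j) (hf_nonneg j)) (fun j => ?_) hbig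
    have : f j = Real.exp (-(N:ℝ)) * ((N:ℝ) ^ (N + j) / (Nat.factorial (N + j))) := by
      simp [hf, poissonPMF_eq]
    rw [this, Nat.add_comm j N]
    have hterm : (0:ℝ) ≤ Real.exp (-(N:ℝ)) * ((N:ℝ) ^ (N + j) / (Nat.factorial (N + j))) := by positivity
    have hj : (j : ℝ) ≤ ((N + j : ℕ) : ℝ) := by push_cast; linarith
    calc (j:ℝ) * (Real.exp (-(N:ℝ)) * ((N:ℝ) ^ (N + j) / (Nat.factorial (N + j))))
        ≤ ((N + j : ℕ):ℝ) * (Real.exp (-(N:ℝ)) * ((N:ℝ) ^ (N + j) / (Nat.factorial (N + j)))) :=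
          mul_le_mul_of_nonneg_right hj hterm
      _ = Real.exp (-(N:ℝ)) * (((N + j : ℕ):ℝ) * ((N:ℝ) ^ (N + j) / (Nat.factorial (N + j)))) := by ring
  have hM2 : Summable (fun j : ℕ => (j : ℝ)^2 * f j) := by
    have hbig := (summable_nat_add_iff (f := fun k : ℕ =>
      Real.exp (-(N:ℝ)) * ((k:ℝ)^2 * ((N:ℝ) ^ k / (Nat.factorial k)))) N).2 hg2
    refine Summable.of_nonneg_of_le (fun j => mul_nonneg (sq_nonneg _) (hf_nonneg j)) (fun j => ?_) hbig
    have : f j = Real.exp (-(N:ℝ)) * ((N:ℝ) ^ (N + j) / (Nat.factorial (N + j))) := by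
      simp [hf, poissonPMF_eq]
    rw [this, Nat.add_comm j N]
    have hterm : (0:ℝ) ≤ Real.exp (-(N:ℝ)) * ((N:ℝ) ^ (N + j) / (Nat.factorial (N + j))) := by positivity
    have hj : (j : ℝ)^2 ≤ ((N + j : ℕ) : ℝ)^2 := by
      have : (j:ℝ) ≤ ((N + j : ℕ):ℝ) := by push_cast; linarith
      exact pow_le_pow_left₀ (by positivity) this 2
    calc (j:ℝ)^2 * (Real.exp (-(N:ℝ)) * ((N:ℝ) ^ (N + j) / (Nat.factorial (N + j))))
        ≤ ((N + j : ℕ):ℝ)^2 * (Real.exp (-(N:ℝ)) * ((N:ℝ) ^ (N + j) / (Nat.factorial (N + j)))) :=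
          mul_le_mul_of_nonneg_right hj hterm
      _ = Real.exp (-(N:ℝ)) * (((N + j : ℕ):ℝ)^2 * ((N:ℝ) ^ (N + j) / (Nat.factorial (N + j)))) := by ring
  set S : ℝ := ∑' j : ℕ, f j with hSdef
  set M1 : ℝ := ∑' j : ℕ, (j : ℝ) * f j with hM1def
  set M2 : ℝ := ∑' j : ℕ, (j : ℝ)^2 * f j with hM2def
  have hS_nonneg : 0 ≤ S := tsum_nonneg hf_nonneg
  have hS_pos : 0 < S := by
    refine Summable.tsum_pos hS hf_nonneg 0 ?_
    have : f 0 = Real.exp (-(N:ℝ)) * ((N:ℝ) ^ (N + 0) / (Nat.factorial (N + 0))) := by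
      simp [hf, poissonPMF_eq]
    rw [this]
    have hNpos : (0:ℝ) < (N:ℝ) := by exact_mod_cast hlam
    positivity
  -- recurrence
  have hrec : ∀ j : ℕ, ((N:ℝ) + (j:ℝ) + 1) * f (j + 1) = (N:ℝ) * f j := by
    intro j
    have h1 : f (j+1) = Real.exp (-(N:ℝ)) * ((N:ℝ) ^ (N + j + 1) / (Nat.factorial (N + j + 1))) := by
      simp [hf, poissonPMF_eq, Nat.add_assoc]
    have h0 : f j = Real.exp (-(N:ℝ)) * ((N:ℝ) ^ (N + j) / (Nat.factorial (N + j))) := by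
      simp [hf, poissonPMF_eq]
    have hfac : (Nat.factorial (N + j + 1) : ℝ) = ((N:ℝ) + j + 1) * Nat.factorial (N + j) := by
      rw [Nat.factorial_succ]; push_cast; ring
    have hfne : (Nat.factorial (N + j) : ℝ) ≠ 0 := Nat.cast_ne_zero.2 (Nat.factorial_ne_zero _)
    have hne : ((N:ℝ) + j + 1) ≠ 0 := by positivity
    rw [h1, h0, hfac, pow_succ]
    field_simp
  -- key identity: M2 = N * S
  have hshift1 : Summable (fun j : ℕ => ((j + 1 : ℕ) : ℝ) * f (j + 1)) :=
    (summable_nat_add_iff (f := fun j : ℕ => (j:ℝ) * f j) 1).2 hM1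
  have hsum_jp1 : Summable (fun j : ℕ => ((j:ℝ) + 1) * f j) := by
    refine (hM1.add hS).congr fun j => ?_
    ring
  have hkey : M2 = (N:ℝ) * S := by
    have e1 : M2 = ∑' j : ℕ, ((j + 1 : ℕ):ℝ)^2 * f (j + 1) := by
      rw [hM2def, Summable.tsum_eq_zero_add hM2]
      simp
    have e2 : ∀ j : ℕ, ((j + 1 : ℕ):ℝ)^2 * f (j + 1)
        = (N:ℝ) * (((j:ℝ) + 1) * f j) - (N:ℝ) * (((j + 1 : ℕ):ℝ) * f (j + 1)) := by
      intro j
      have h := hrec j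
      have : ((j:ℝ) + 1) * f (j+1) = (N:ℝ) * f j - (N:ℝ) * f (j+1) := by
        nlinarith [hrec j]
      push_cast
      nlinarith [this]
    rw [e1]
    calc (∑' j : ℕ, ((j + 1 : ℕ):ℝ)^2 * f (j + 1))
        = ∑' j : ℕ, ((N:ℝ) * (((j:ℝ) + 1) * f j) - (N:ℝ) * (((j + 1 : ℕ):ℝ) * f (j + 1))) := by
          exact tsum_congr e2
      _ = (N:ℝ) * (∑' j : ℕ, ((j:ℝ) + 1) * f j) - (N:ℝ) * (∑' j : ℕ, ((j + 1 : ℕ):ℝ) * f (j + 1)) := by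
          rw [Summable.tsum_sub (hsum_jp1.mul_left _) (hshift1.mul_left _), tsum_mul_left, tsum_mul_left]
      _ = (N:ℝ) * (M1 + S) - (N:ℝ) * M1 := by
          congr 2
          · rw [hM1def, hSdef, ← Summable.tsum_add hM1 hS]
            exact tsum_congr fun j => by ring
          · have := Summable.tsum_eq_zero_add hM1
            rw [hM1def, this]
            simp
      _ = (N:ℝ) * S := by ring
  -- Cauchy-Schwarz: M1 ≤ sqrt N * S
  have hCS : M1 ≤ Real.sqrt N * S := by
    have hb : ∀ s : Finset ℕ, (∑ j ∈ s, (j:ℝ) * f j) ≤ Real.sqrt N * S := by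
      intro s
      have hsum_nonneg : 0 ≤ ∑ j ∈ s, (j:ℝ) * f j :=
        Finset.sum_nonneg fun j _ => mul_nonneg (Nat.cast_nonneg j) (hf_nonneg j)
      have hcs := Finset.sum_mul_sq_le_sq_mul_sq s (fun j => (j:ℝ) * Real.sqrt (f j))
        (fun j => Real.sqrt (f j))
      have hterm : ∀ j : ℕ, ((j:ℝ) * Real.sqrt (f j)) * Real.sqrt (f j) = (j:ℝ) * f j := by
        intro j
        rw [mul_assoc, Real.mul_self_sqrt (hf_nonneg j)]
      have hterm2 : ∀ j : ℕ, ((j:ℝ) * Real.sqrt (f j))^2 = (j:ℝ)^2 * f j := by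
        intro j
        rw [mul_pow, Real.sq_sqrt (hf_nonneg j)]
      have hterm3 : ∀ j : ℕ, (Real.sqrt (f j))^2 = f j := fun j => Real.sq_sqrt (hf_nonneg j)
      simp only [hterm, hterm2, hterm3] at hcs
      have h1 : (∑ j ∈ s, (j:ℝ)^2 * f j) ≤ M2 :=
        Summable.sum_le_tsum s (fun j _ => mul_nonneg (sq_nonneg _) (hf_nonneg j)) hM2
      have h2 : (∑ j ∈ s, f j) ≤ S := Summable.sum_le_tsum s (fun j _ => hf_nonneg j) hS
      have h3 : (∑ j ∈ s, (j:ℝ) * f j)^2 ≤ M2 * S := by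
        have hM2_nonneg : 0 ≤ M2 := tsum_nonneg fun j => mul_nonneg (sq_nonneg _) (hf_nonneg j)
        have hfin2 : 0 ≤ ∑ j ∈ s, f j := Finset.sum_nonneg fun j _ => hf_nonneg j
        have hfin1 : 0 ≤ ∑ j ∈ s, (j:ℝ)^2 * f j := Finset.sum_nonneg fun j _ => mul_nonneg (sq_nonneg _) (hf_nonneg j)
        calc (∑ j ∈ s, (j:ℝ) * f j)^2
            ≤ (∑ j ∈ s, (j:ℝ)^2 * f j) * (∑ j ∈ s, f j) := hcs
          _ ≤ M2 * S := mul_le_mul h1 h2 hfin2 hM2_nonneg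
      have h4 : M2 * S = (N:ℝ) * S * S := by rw [hkey]
      have h5 : (∑ j ∈ s, (j:ℝ) * f j) ≤ Real.sqrt ((N:ℝ) * S * S) := by
        rw [Real.le_sqrt hsum_nonneg (by exact mul_nonneg (mul_nonneg hx0 hS_nonneg) hS_nonneg)]
        rw [← h4]; exact h3
      calc (∑ j ∈ s, (j:ℝ) * f j) ≤ Real.sqrt ((N:ℝ) * S * S) := h5
        _ = Real.sqrt N * S := by
            rw [mul_assoc, Real.sqrt_mul hx0, Real.sqrt_mul_self hS_nonneg]
    exact Summable.tsum_le_of_sum_le hM1 hb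
  -- conclude
  have hnum : (∑' k : ℕ, if N ≤ k then (k : ℝ) * poissonPMF N k else 0) = (N:ℝ) * S + M1 := by
    rw [hreindex (fun k => (k:ℝ) * poissonPMF N k)]
    have : ∀ j : ℕ, ((N + j : ℕ):ℝ) * poissonPMF N (N + j) = (N:ℝ) * f j + (j:ℝ) * f j := by
      intro j
      simp only [hf]
      push_cast
      ring
    rw [tsum_congr this, Summable.tsum_add (hS.mul_left _) hM1, tsum_mul_left]
  have hden : (∑' k : ℕ, if N ≤ k then poissonPMF N k else 0) = S := by
    rw [hreindex (fun k => poissonPMF N k)]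
  rw [hnum, hden, div_le_iff₀ hS_pos]
  have : ((N:ℝ) + Real.sqrt N) * S = (N:ℝ) * S + Real.sqrt N * S := by ring
  rw [this]
  linarith [hCS]
end

section
/- For 0 < λ < μ and k a nonnegative integer with P[Poi(λ) ≥ k] > 0, we have E[Poi(λ) | Poi(λ) ≥ k] ≤ E[Poi(μ) | Poi(μ) ≥ k]. -/
lemma poissonPMF_nonneg_s18 {t : ℝ} (ht : 0 ≤ t) (j : ℕ) : 0 ≤ poissonPMF t j := by
  unfold poissonPMF; positivity

lemma poissonPMF_pos {t : ℝ} (ht : 0 < t) (j : ℕ) : 0 < poissonPMF t j := by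
  unfold poissonPMF; positivity

lemma summable_poissonPMF {t : ℝ} : Summable (poissonPMF t) := by
  unfold poissonPMF
  simpa [mul_div_assoc] using (Real.summable_pow_div_factorial t).mul_left (Real.exp (-t))

lemma summable_mul_poissonPMF {t : ℝ} (ht : 0 ≤ t) :
    Summable (fun j : ℕ => (j : ℝ) * poissonPMF t j) := by
  have hb : Summable (fun j : ℕ => Real.exp (-t) * ((2 * t) ^ j / j.factorial)) :=
    (Real.summable_pow_div_factorial (2 * t)).mul_left _
  refine Summable.of_nonneg_of_le
    (fun j => mul_nonneg (Nat.cast_nonneg _) (poissonPMF_nonneg_s18 ht j)) ?_ hb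
  intro j
  have h2 : (j : ℝ) ≤ 2 ^ j := by exact_mod_cast (Nat.lt_two_pow_self (n := j)).le
  have hfac : (0 : ℝ) < j.factorial := by positivity
  have := mul_le_mul_of_nonneg_right h2
    (by positivity : (0:ℝ) ≤ Real.exp (-t) * t ^ j / j.factorial)
  unfold poissonPMF
  calc (j : ℝ) * (Real.exp (-t) * t ^ j / j.factorial)
      ≤ 2 ^ j * (Real.exp (-t) * t ^ j / j.factorial) := this
    _ = Real.exp (-t) * ((2 * t) ^ j / j.factorial) := by rw [mul_pow]; ring

lemma poissonPMF_key {lam mu : ℝ} (h0 : 0 ≤ lam) (h : lam ≤ mu) {i j : ℕ} (hij : j ≤ i) :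
    poissonPMF lam i * poissonPMF mu j ≤ poissonPMF mu i * poissonPMF lam j := by
  have hmu : 0 ≤ mu := h0.trans h
  have hpow : lam ^ i * mu ^ j ≤ mu ^ i * lam ^ j := by
    obtain ⟨d, rfl⟩ := Nat.exists_eq_add_of_le hij
    rw [pow_add, pow_add]
    have hd : lam ^ d ≤ mu ^ d := pow_le_pow_left₀ h0 h d
    nlinarith [mul_le_mul_of_nonneg_left hd
      (mul_nonneg (pow_nonneg h0 j) (pow_nonneg hmu j))]
  calc poissonPMF lam i * poissonPMF mu j
      = (Real.exp (-lam) * Real.exp (-mu) / ((i.factorial : ℝ) * j.factorial))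
          * (lam ^ i * mu ^ j) := by unfold poissonPMF; ring
    _ ≤ (Real.exp (-lam) * Real.exp (-mu) / ((i.factorial : ℝ) * j.factorial))
          * (mu ^ i * lam ^ j) := by
        apply mul_le_mul_of_nonneg_left hpow
        positivity
    _ = poissonPMF mu i * poissonPMF lam j := by unfold poissonPMF; ring

set_option maxHeartbeats 1000000 in
/-- The Poisson tail conditional expectation is monotone in the mean. -/
theorem poisson_tail_cond_exp_monotone
    (lam mu : ℝ) (hlam : 0 < lam) (hlm : lam < mu) (k : ℕ)
    (hpos : 0 < ∑' j : ℕ, if k ≤ j then poissonPMF lam j else 0) :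
    (∑' j : ℕ, if k ≤ j then (j : ℝ) * poissonPMF lam j else 0) /
        (∑' j : ℕ, if k ≤ j then poissonPMF lam j else 0)
      ≤ (∑' j : ℕ, if k ≤ j then (j : ℝ) * poissonPMF mu j else 0) /
        (∑' j : ℕ, if k ≤ j then poissonPMF mu j else 0) := by
  have hmu : 0 < mu := hlam.trans hlm
  set f1 : ℕ → ℝ := fun j => if k ≤ j then (j : ℝ) * poissonPMF lam j else 0 with hf1
  set g1 : ℕ → ℝ := fun j => if k ≤ j then poissonPMF lam j else 0 with hg1
  set f2 : ℕ → ℝ := fun j => if k ≤ j then (j : ℝ) * poissonPMF mu j else 0 with hf2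
  set g2 : ℕ → ℝ := fun j => if k ≤ j then poissonPMF mu j else 0 with hg2
  have hf1n : ∀ j, 0 ≤ f1 j := fun j => by
    simp only [hf1]; split
    · exact mul_nonneg (Nat.cast_nonneg _) (poissonPMF_nonneg_s18 hlam.le _)
    · exact le_rfl
  have hg1n : ∀ j, 0 ≤ g1 j := fun j => by
    simp only [hg1]; split
    · exact poissonPMF_nonneg_s18 hlam.le _
    · exact le_rfl
  have hf2n : ∀ j, 0 ≤ f2 j := fun j => by
    simp only [hf2]; split
    · exact mul_nonneg (Nat.cast_nonneg _) (poissonPMF_nonneg_s18 hmu.le _)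
    · exact le_rfl
  have hg2n : ∀ j, 0 ≤ g2 j := fun j => by
    simp only [hg2]; split
    · exact poissonPMF_nonneg_s18 hmu.le _
    · exact le_rfl
  have hf1s : Summable f1 := by
    refine Summable.of_nonneg_of_le hf1n (fun j => ?_) (summable_mul_poissonPMF hlam.le)
    simp only [hf1]; split
    · exact le_rfl
    · exact mul_nonneg (Nat.cast_nonneg _) (poissonPMF_nonneg_s18 hlam.le _)
  have hg1s : Summable g1 := by
    refine Summable.of_nonneg_of_le hg1n (fun j => ?_) (summable_poissonPMF (t := lam))
    simp only [hg1]; split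
    · exact le_rfl
    · exact poissonPMF_nonneg_s18 hlam.le _
  have hf2s : Summable f2 := by
    refine Summable.of_nonneg_of_le hf2n (fun j => ?_) (summable_mul_poissonPMF hmu.le)
    simp only [hf2]; split
    · exact le_rfl
    · exact mul_nonneg (Nat.cast_nonneg _) (poissonPMF_nonneg_s18 hmu.le _)
  have hg2s : Summable g2 := by
    refine Summable.of_nonneg_of_le hg2n (fun j => ?_) (summable_poissonPMF (t := mu))
    simp only [hg2]; split
    · exact le_rfl
    · exact poissonPMF_nonneg_s18 hmu.le _
  have hg2pos : 0 < ∑' j, g2 j := by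
    refine Summable.tsum_pos hg2s hg2n k ?_
    simp only [hg2, le_refl, if_true]
    exact poissonPMF_pos hmu k
  -- norm-summability
  have norm_of : ∀ {f : ℕ → ℝ}, Summable f → (∀ j, 0 ≤ f j) →
      Summable (fun j => ‖f j‖) := fun hs hn =>
    hs.congr (fun j => (Real.norm_of_nonneg (hn j)).symm)
  set F : ℕ × ℕ → ℝ := fun z => f1 z.1 * g2 z.2 with hF
  set G : ℕ × ℕ → ℝ := fun z => f2 z.1 * g1 z.2 with hG
  have hFs : Summable F := hf1s.mul_of_nonneg hg2s hf1n hg2n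
  have hGs : Summable G := hf2s.mul_of_nonneg hg1s hf2n hg1n
  have hFsw : Summable (fun z : ℕ × ℕ => F z.swap) :=
    ((Equiv.prodComm ℕ ℕ).summable_iff).mpr hFs
  have hGsw : Summable (fun z : ℕ × ℕ => G z.swap) :=
    ((Equiv.prodComm ℕ ℕ).summable_iff).mpr hGs
  have hFswap : ∑' z : ℕ × ℕ, F z.swap = ∑' z, F z := (Equiv.prodComm ℕ ℕ).tsum_eq F
  have hGswap : ∑' z : ℕ × ℕ, G z.swap = ∑' z, G z := (Equiv.prodComm ℕ ℕ).tsum_eq G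
  -- pointwise symmetrized inequality
  have hpoint : ∀ z : ℕ × ℕ, F z + F z.swap ≤ G z + G z.swap := by
    rintro ⟨i, j⟩
    simp only [hF, hG, hf1, hf2, hg1, hg2, Prod.swap]
    by_cases hi : k ≤ i <;> by_cases hj : k ≤ j <;> simp [hi, hj]
    rcases le_total j i with hij | hij
    · have hkey := poissonPMF_key hlam.le hlm.le hij
      have hji : (j : ℝ) ≤ i := by exact_mod_cast hij
      nlinarith [hkey, hji, Nat.cast_nonneg (α := ℝ) j,
        poissonPMF_nonneg_s18 hlam.le i, poissonPMF_nonneg_s18 hlam.le j,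
        poissonPMF_nonneg_s18 hmu.le i, poissonPMF_nonneg_s18 hmu.le j]
    · have hkey := poissonPMF_key hlam.le hlm.le hij
      have hji : (i : ℝ) ≤ j := by exact_mod_cast hij
      nlinarith [hkey, hji, Nat.cast_nonneg (α := ℝ) i,
        poissonPMF_nonneg_s18 hlam.le i, poissonPMF_nonneg_s18 hlam.le j,
        poissonPMF_nonneg_s18 hmu.le i, poissonPMF_nonneg_s18 hmu.le j]
  have hsum_le : ∑' z : ℕ × ℕ, F z ≤ ∑' z : ℕ × ℕ, G z := by
    have h2 : ∑' z : ℕ × ℕ, (F z + F z.swap) ≤ ∑' z : ℕ × ℕ, (G z + G z.swap) :=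
      Summable.tsum_le_tsum hpoint (hFs.add hFsw) (hGs.add hGsw)
    rw [Summable.tsum_add hFs hFsw, Summable.tsum_add hGs hGsw, hFswap, hGswap] at h2
    linarith
  have e1 : (∑' j, f1 j) * (∑' j, g2 j) = ∑' z : ℕ × ℕ, F z :=
    tsum_mul_tsum_of_summable_norm (norm_of hf1s hf1n) (norm_of hg2s hg2n)
  have e2 : (∑' j, f2 j) * (∑' j, g1 j) = ∑' z : ℕ × ℕ, G z :=
    tsum_mul_tsum_of_summable_norm (norm_of hf2s hf2n) (norm_of hg1s hg1n)
  rw [div_le_div_iff₀ hpos hg2pos]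
  rw [e1, e2]
  exact hsum_le
end
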